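/- arXiv:1902.01136 — 10 statements merged into one kernel-verified Lean document; each statement's English description precedes it below -/
import Mathlib

section
/- The supremum functional σ(f) = sup_{x∈X} f(x) on ℓ^∞(X), for X an arbitrary nonempty set, is Hadamard directionally differentiable at every f ∈ ℓ^∞(X), with derivative σ'_f(g) = lim_{ε↓0} sup_{A_ε(f)} g, where A_ε(f) = {x ∈ X : f(x) ≥ sup_X f − ε}. -/
/-!
The derivative is the limit of `ε ↦ sup_{A_ε(f)} g`, which exists because this function is
monotone and bounded. Since `σ` is `1`-Lipschitz for the sup norm, uniform convergence `hₙ → g`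
changes the difference quotients by at most `‖hₙ - g‖`, so it suffices to treat the fixed
direction `g`. There, points of `A_{tη}(f)` give `σ(f + tg) ≥ σ(f) + t (sup_{A_{tη}(f)} g - η)`,
while for `t` small a point outside `A_δ(f)` cannot beat `σ(f) + t sup_{A_δ(f)} g`.
-/

open Set Filter Topology

noncomputable section SupDirectionalDerivative

variable {X : Type*} {f g : X → ℝ}

/-- The set `A_ε(f)` of `ε`-maximizers of `f`. -/
def approxArgmax (f : X → ℝ) (ε : ℝ) : Set X := {x | (⨆ y, f y) - ε ≤ f x}

def approxArgmaxSup (f g : X → ℝ) (ε : ℝ) : ℝ := sSup (g '' approxArgmax f ε)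

def supDirDeriv (f g : X → ℝ) : ℝ := sInf (approxArgmaxSup f g '' Ioi 0)

def supDiffQuot (f g : X → ℝ) (t : ℝ) : ℝ := ((⨆ x, f x + t * g x) - ⨆ x, f x) / t

lemma bddAbove_range_of_abs_le (hf : ∃ C, ∀ x, |f x| ≤ C) : BddAbove (range f) :=
  let ⟨C, hC⟩ := hf
  ⟨C, forall_mem_range.2 fun x => (abs_le.1 (hC x)).2⟩

lemma bddBelow_range_of_abs_le (hf : ∃ C, ∀ x, |f x| ≤ C) : BddBelow (range f) :=
  let ⟨C, hC⟩ := hf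
  ⟨-C, forall_mem_range.2 fun x => (abs_le.1 (hC x)).1⟩

lemma dist_ciSup_le [Nonempty X] {u v : X → ℝ} {η : ℝ} (hu : BddAbove (range u))
    (huv : ∀ x, dist (u x) (v x) ≤ η) : dist (⨆ x, u x) (⨆ x, v x) ≤ η := by
  have huv' : ∀ x, |u x - v x| ≤ η := fun x => Real.dist_eq _ _ ▸ huv x
  obtain ⟨B, hB⟩ := hu
  have hv : BddAbove (range v) :=
    ⟨B + η, forall_mem_range.2 fun x => by linarith [hB (mem_range_self x), abs_le.1 (huv' x)]⟩
  rw [Real.dist_eq, abs_sub_le_iff]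
  constructor
  · refine sub_le_iff_le_add.2 (ciSup_le fun x => ?_)
    linarith [le_ciSup hv x, abs_le.1 (huv' x)]
  · refine sub_le_iff_le_add.2 (ciSup_le fun x => ?_)
    linarith [le_ciSup ⟨B, hB⟩ x, abs_le.1 (huv' x)]

lemma bddAbove_range_add_mul (hf : BddAbove (range f)) (hg : BddAbove (range g)) {t : ℝ}
    (ht : 0 ≤ t) : BddAbove (range fun x => f x + t * g x) :=
  hf.range_add (hg.range_comp_left (monotone_mul_left_of_nonneg ht))

lemma dist_supDiffQuot_le [Nonempty X] {u v : X → ℝ} {t η : ℝ} (hf : BddAbove (range f))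
    (hu : BddAbove (range u)) (ht : 0 < t) (huv : ∀ x, dist (u x) (v x) ≤ η) :
    dist (supDiffQuot f u t) (supDiffQuot f v t) ≤ η := by
  have hsup : dist (⨆ x, f x + t * u x) (⨆ x, f x + t * v x) ≤ t * η :=
    dist_ciSup_le (bddAbove_range_add_mul hf hu ht.le) fun x => by
      rw [dist_add_left, Real.dist_eq, ← mul_sub, abs_mul, abs_of_pos ht, ← Real.dist_eq]
      exact mul_le_mul_of_nonneg_left (huv x) ht.le
  rw [Real.dist_eq] at hsup
  rw [supDiffQuot, supDiffQuot, Real.dist_eq, ← sub_div, sub_sub_sub_cancel_right, abs_div,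
    abs_of_pos ht, div_le_iff₀ ht, mul_comm]
  exact hsup

lemma approxArgmax_nonempty [Nonempty X] (f : X → ℝ) {ε : ℝ} (hε : 0 < ε) :
    (approxArgmax f ε).Nonempty :=
  let ⟨x, hx⟩ := exists_lt_of_lt_ciSup (sub_lt_self (⨆ y, f y) hε)
  ⟨x, hx.le⟩

lemma approxArgmax_mono (f : X → ℝ) : Monotone (approxArgmax f) :=
  fun _ _ hab _ hx => (sub_le_sub_left hab _).trans hx

lemma le_approxArgmaxSup (hg : BddAbove (range g)) {ε : ℝ} {x : X}
    (hx : x ∈ approxArgmax f ε) : g x ≤ approxArgmaxSup f g ε :=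
  le_csSup (hg.mono (image_subset_range _ _)) (mem_image_of_mem g hx)

lemma approxArgmaxSup_le [Nonempty X] {ε c : ℝ} (hε : 0 < ε)
    (h : ∀ x ∈ approxArgmax f ε, g x ≤ c) : approxArgmaxSup f g ε ≤ c :=
  csSup_le ((approxArgmax_nonempty f hε).image g) (forall_mem_image.2 h)

lemma monotoneOn_approxArgmaxSup [Nonempty X] (hg : BddAbove (range g)) : MonotoneOn (approxArgmaxSup f g) (Ioi 0) :=
  fun _ ha _ _ hab => csSup_le_csSup (hg.mono (image_subset_range _ _))
    ((approxArgmax_nonempty f ha).image g) (image_mono (approxArgmax_mono f hab))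

lemma bddBelow_approxArgmaxSup [Nonempty X] (hg : BddAbove (range g)) (hg' : BddBelow (range g)) :
    BddBelow (approxArgmaxSup f g '' Ioi 0) := by
  obtain ⟨b, hb⟩ := hg'
  refine ⟨b, forall_mem_image.2 fun ε hε => ?_⟩
  obtain ⟨x, hx⟩ := approxArgmax_nonempty f hε
  exact (hb (mem_range_self x)).trans (le_approxArgmaxSup hg hx)

lemma supDirDeriv_le_approxArgmaxSup [Nonempty X] (hg : BddAbove (range g)) (hg' : BddBelow (range g)) {ε : ℝ} (hε : 0 < ε) :
    supDirDeriv f g ≤ approxArgmaxSup f g ε :=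
  csInf_le (bddBelow_approxArgmaxSup hg hg') (mem_image_of_mem _ hε)

lemma tendsto_approxArgmaxSup [Nonempty X] (hg : BddAbove (range g)) (hg' : BddBelow (range g)) :
    Tendsto (approxArgmaxSup f g) (𝓝[>] 0) (𝓝 (supDirDeriv f g)) :=
  (monotoneOn_approxArgmaxSup hg).tendsto_nhdsGT (bddBelow_approxArgmaxSup hg hg')

lemma approxArgmaxSup_sub_le_supDiffQuot [Nonempty X] (hf : BddAbove (range f))
    (hg : BddAbove (range g)) {t η : ℝ} (ht : 0 < t) (hη : 0 < η) :
    approxArgmaxSup f g (t * η) - η ≤ supDiffQuot f g t := by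
  refine sub_le_iff_le_add.2 (approxArgmaxSup_le (mul_pos ht hη) fun x hx => ?_)
  have hsup := le_ciSup (bddAbove_range_add_mul hf hg ht.le) x
  rw [← sub_le_iff_le_add, supDiffQuot, le_div_iff₀ ht]
  simp only [approxArgmax, mem_ofPred_eq] at hx
  linarith

lemma supDiffQuot_le_approxArgmaxSup [Nonempty X] (hf : BddAbove (range f)) {B t δ : ℝ}
    (hB : B ∈ upperBounds (range g)) (ht : 0 < t)
    (htδ : t * (B - approxArgmaxSup f g δ) ≤ δ) :
    supDiffQuot f g t ≤ approxArgmaxSup f g δ := by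
  rw [supDiffQuot, div_le_iff₀ ht, sub_le_iff_le_add]
  refine ciSup_le fun x => ?_
  have hfx := le_ciSup hf x
  by_cases hx : x ∈ approxArgmax f δ
  · nlinarith [le_approxArgmaxSup ⟨B, hB⟩ hx]
  · simp only [approxArgmax, mem_ofPred_eq, not_le] at hx
    nlinarith [hB (mem_range_self x)]

lemma tendsto_supDiffQuot [Nonempty X] (hf : BddAbove (range f)) (hg : BddAbove (range g))
    (hg' : BddBelow (range g)) :
    Tendsto (supDiffQuot f g) (𝓝[>] 0) (𝓝 (supDirDeriv f g)) := by
  refine tendsto_order.2 ⟨fun l hl => ?_, fun u hu => ?_⟩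
  · filter_upwards [self_mem_nhdsWithin] with t ht
    have hη : 0 < (supDirDeriv f g - l) / 2 := half_pos (sub_pos.2 hl)
    linarith [supDirDeriv_le_approxArgmaxSup (f := f) hg hg' (mul_pos ht hη),
      approxArgmaxSup_sub_le_supDiffQuot hf hg ht hη]
  · obtain ⟨δ, hδu, hδ⟩ := ((tendsto_approxArgmaxSup hg hg').eventually
      (gt_mem_nhds hu)).and self_mem_nhdsWithin |>.exists
    obtain ⟨B, hB⟩ := hg
    have hsmall : ∀ᶠ t in 𝓝[>] (0 : ℝ), t * (B - approxArgmaxSup f g δ) < δ := by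
      refine (tendsto_nhdsWithin_of_tendsto_nhds ?_).eventually (gt_mem_nhds hδ)
      simpa using (continuous_mul_const (B - approxArgmaxSup f g δ)).tendsto 0
    filter_upwards [self_mem_nhdsWithin, hsmall] with t ht htδ
    exact (supDiffQuot_le_approxArgmaxSup hf hB ht htδ.le).trans_lt hδu

theorem tendsto_supDiffQuot_of_tendstoUniformly [Nonempty X] {ι : Type*} {l : Filter ι}
    {h : ι → X → ℝ} {t : ι → ℝ} (hf : BddAbove (range f)) (hg : BddAbove (range g))
    (hg' : BddBelow (range g)) (hh : TendstoUniformly h g l) (ht : Tendsto t l (𝓝[>] 0)) :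
    Tendsto (fun i => supDiffQuot f (h i) (t i)) l (𝓝 (supDirDeriv f g)) := by
  refine ((tendsto_supDiffQuot hf hg hg').comp ht).congr_dist ?_
  refine Metric.tendsto_nhds.2 fun ε hε => ?_
  filter_upwards [Metric.tendstoUniformly_iff.1 hh (ε / 2) (half_pos hε),
    ht self_mem_nhdsWithin] with i hi hti
  rw [dist_zero_right, Real.norm_of_nonneg dist_nonneg]
  exact (dist_supDiffQuot_le hf hg hti fun x => (hi x).le).trans_lt (half_lt_self hε)

end SupDirectionalDerivative

/-- The supremum functional on `ℓ^∞(X)` is Hadamard directionally differentiable at every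
bounded `f`, with derivative `σ'_f(g) = lim_{ε↓0} sup_{A_ε(f)} g`. -/
theorem stmt_0 {X : Type*} [Nonempty X] (f : X → ℝ) (hf : ∃ C, ∀ x, |f x| ≤ C)
    (g : X → ℝ) (hg : ∃ C, ∀ x, |g x| ≤ C) :
    ∃ L : ℝ,
      Tendsto (fun ε : ℝ => sSup (g '' {x | (⨆ y, f y) - ε ≤ f x}))
        (nhdsWithin 0 (Set.Ioi 0)) (𝓝 L) ∧
      ∀ (t : ℕ → ℝ) (h : ℕ → X → ℝ),
        Antitone t → (∀ n, 0 < t n) → Tendsto t atTop (𝓝 0) →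
        (∀ n, ∃ C, ∀ x, |h n x| ≤ C) →
        TendstoUniformly h g atTop →
        Tendsto (fun n => ((⨆ x, (f x + t n * h n x)) - ⨆ x, f x) / t n) atTop (𝓝 L) := by
  have hg' := bddBelow_range_of_abs_le hg
  refine ⟨supDirDeriv f g, tendsto_approxArgmaxSup (bddAbove_range_of_abs_le hg) hg', ?_⟩
  intro t h _ htpos ht _ hh
  exact tendsto_supDiffQuot_of_tendstoUniformly (bddAbove_range_of_abs_le hf)
    (bddAbove_range_of_abs_le hg) hg' hh
    (tendsto_nhdsWithin_iff.2 ⟨ht, Eventually.of_forall htpos⟩)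
end

section
/- For f ∈ ℓ^∞(X), a sequence s_n ↑ ∞, and g ∈ ℓ^∞(X), the quantity σ_n(f,g) := sup_X(s_n f + g) − s_n sup_X f converges as n → ∞ to lim_{ε↓0} sup_{A_ε(f)} g, where A_ε(f) = {x : f(x) ≥ sup_X f − ε}. -/
open Filter Topology

/-- For `f, g ∈ ℓ^∞(X)` and `s_n ↑ ∞`, the quantity
`σ_n(f,g) = sup_X (s_n f + g) − s_n sup_X f` converges to `lim_{ε↓0} sup_{A_ε(f)} g`. -/
theorem stmt_1 {X : Type*} [Nonempty X] (f : X → ℝ) (hf : ∃ C, ∀ x, |f x| ≤ C)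
    (g : X → ℝ) (hg : ∃ C, ∀ x, |g x| ≤ C)
    (s : ℕ → ℝ) (hs_mono : Monotone s) (hs : Tendsto s atTop atTop)
    (L : ℝ)
    (hL : Tendsto (fun ε : ℝ => sSup (g '' {x | (⨆ y, f y) - ε ≤ f x}))
        (nhdsWithin 0 (Set.Ioi 0)) (𝓝 L)) :
    Tendsto (fun n => (⨆ x, (s n * f x + g x)) - s n * ⨆ x, f x) atTop (𝓝 L) := by
  obtain ⟨Cf, hCf⟩ := hf
  obtain ⟨Cg, hCg⟩ := hg
  set F := ⨆ y, f y with hFdef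
  have hbf : BddAbove (Set.range f) := ⟨Cf, by rintro _ ⟨x, rfl⟩; exact (abs_le.1 (hCf x)).2⟩
  have hfF : ∀ x, f x ≤ F := fun x => le_ciSup hbf x
  have hbh : ∀ n, BddAbove (Set.range fun x => s n * f x + g x) := by
    intro n
    refine ⟨|s n| * Cf + Cg, ?_⟩
    rintro _ ⟨x, rfl⟩
    dsimp only
    have h1 : s n * f x ≤ |s n| * Cf := by
      calc s n * f x ≤ |s n * f x| := le_abs_self _
        _ = |s n| * |f x| := abs_mul _ _
        _ ≤ |s n| * Cf := mul_le_mul_of_nonneg_left (hCf x) (abs_nonneg _)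
    have h2 : g x ≤ Cg := (abs_le.1 (hCg x)).2
    linarith
  have hbg : ∀ ε : ℝ, BddAbove (g '' {x | F - ε ≤ f x}) := by
    intro ε
    exact ⟨Cg, by rintro _ ⟨y, _, rfl⟩; exact (abs_le.1 (hCg y)).2⟩
  have key_lower : ∀ n, 0 ≤ s n → L ≤ (⨆ x, (s n * f x + g x)) - s n * F := by
    intro n hn
    have htend : Tendsto (fun ε : ℝ => sSup (g '' {x | F - ε ≤ f x}) - s n * ε)
        (nhdsWithin 0 (Set.Ioi 0)) (𝓝 (L - s n * 0)) :=
      hL.sub ((tendsto_const_nhds.mul tendsto_id).mono_left nhdsWithin_le_nhds)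
    rw [mul_zero, sub_zero] at htend
    refine le_of_tendsto htend ?_
    filter_upwards [self_mem_nhdsWithin] with ε (hε : ε ∈ Set.Ioi 0)
    rw [sub_le_iff_le_add]
    refine csSup_le ?_ ?_
    · obtain ⟨x, hx⟩ := exists_lt_of_lt_ciSup (show F - ε < F by
        simp only [Set.mem_Ioi] at hε; linarith)
      exact ⟨g x, x, le_of_lt hx, rfl⟩
    · rintro _ ⟨x, hx, rfl⟩
      have h1 : s n * f x + g x ≤ ⨆ x, (s n * f x + g x) := le_ciSup (hbh n) x
      have h2 : s n * (F - ε) ≤ s n * f x := mul_le_mul_of_nonneg_left hx hn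
      have h3 : s n * (F - ε) = s n * F - s n * ε := mul_sub _ _ _
      linarith
  have key_upper : ∀ ε : ℝ, 0 < ε → ∀ n, 0 ≤ s n →
      (⨆ x, (s n * f x + g x)) - s n * F ≤
        max (sSup (g '' {x | F - ε ≤ f x})) (Cg - s n * ε) := by
    intro ε hε n hn
    rw [sub_le_iff_le_add]
    refine ciSup_le fun x => ?_
    by_cases hx : F - ε ≤ f x
    · have hg1 : g x ≤ sSup (g '' {x | F - ε ≤ f x}) := le_csSup (hbg ε) ⟨x, hx, rfl⟩
      have h2 : s n * f x ≤ s n * F := mul_le_mul_of_nonneg_left (hfF x) hn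
      have h3 : sSup (g '' {x | F - ε ≤ f x}) ≤ max (sSup (g '' {x | F - ε ≤ f x})) (Cg - s n * ε) :=
        le_max_left _ _
      linarith
    · push_neg at hx
      have h2 : s n * f x ≤ s n * (F - ε) := mul_le_mul_of_nonneg_left hx.le hn
      have h3 : s n * (F - ε) = s n * F - s n * ε := mul_sub _ _ _
      have hgx : g x ≤ Cg := (abs_le.1 (hCg x)).2
      have h4 : Cg - s n * ε ≤ max (sSup (g '' {x | F - ε ≤ f x})) (Cg - s n * ε) :=
        le_max_right _ _
      linarith
  refine tendsto_order.2 ⟨?_, ?_⟩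
  · intro b hb
    filter_upwards [hs.eventually_ge_atTop 0] with n hn
    exact lt_of_lt_of_le hb (key_lower n hn)
  · intro b hb
    have hev : ∀ᶠ ε in nhdsWithin 0 (Set.Ioi 0),
        sSup (g '' {x | F - ε ≤ f x}) < b := hL.eventually_lt_const hb
    obtain ⟨ε, hεb, hε⟩ := (hev.and self_mem_nhdsWithin).exists
    filter_upwards [hs.eventually_ge_atTop 0,
      (hs.atTop_mul_const hε).eventually_gt_atTop (Cg - b)] with n hn0 hn1
    refine lt_of_le_of_lt (key_upper ε hε n hn0) ?_
    rw [max_lt_iff]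
    exact ⟨hεb, by linarith⟩
end

section
/- Let (X, d) be a compact metric space and f ∈ ℓ^∞(X). For every sequence t_n ↓ 0 and g_n → g in ℓ^∞(X), lim_n (sup_X(f + t_n g_n) − sup_X f)/t_n = sup_{A_0(f)} g^△_f, where A_0(f) = {x : ∃ x_n → x with f(x_n) → sup_X f} and g^△_f(x) = sup{ limsup_n g(x_n) : x_n → x, f(x_n) → sup_X f } for x ∈ A_0(f). -/
open Filter Topology

/-- On a compact metric space, the supremum functional on bounded (not necessarily
continuous) functions is Hadamard directionally differentiable at every `f`, with derivative
`sup_{A_0(f)} g^△_f`, where `A_0(f)` is the set of limits of maximizing sequences and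
`g^△_f(x)` is the largest limsup of `g` along maximizing sequences converging to `x`. -/
theorem stmt_5 {X : Type*} [MetricSpace X] [CompactSpace X] [Nonempty X]
    (f : X → ℝ) (hf : ∃ C, ∀ x, |f x| ≤ C)
    (g : X → ℝ) (hg : ∃ C, ∀ x, |g x| ≤ C)
    (t : ℕ → ℝ) (gs : ℕ → X → ℝ)
    (ht_anti : Antitone t) (ht_pos : ∀ n, 0 < t n) (ht : Tendsto t atTop (𝓝 0))
    (hgs_bdd : ∀ n, ∃ C, ∀ x, |gs n x| ≤ C)
    (hgs : TendstoUniformly gs g atTop) :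
    Tendsto (fun n => ((⨆ x, (f x + t n * gs n x)) - ⨆ x, f x) / t n) atTop
      (𝓝 (sSup ((fun x => sSup {L : ℝ | ∃ u : ℕ → X,
            Tendsto u atTop (𝓝 x) ∧ Tendsto (fun k => f (u k)) atTop (𝓝 (⨆ y, f y)) ∧
            Filter.limsup (fun k => g (u k)) atTop = L}) ''
        {x : X | ∃ u : ℕ → X,
            Tendsto u atTop (𝓝 x) ∧ Tendsto (fun k => f (u k)) atTop (𝓝 (⨆ y, f y))}))) := by
  obtain ⟨Cf, hCf⟩ := hf
  obtain ⟨Cg0, hCg0⟩ := hg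
  set Cg : ℝ := max Cg0 0 with hCgdef
  have hCg : ∀ x, |g x| ≤ Cg := fun x => (hCg0 x).trans (le_max_left _ _)
  have hCg0' : (0:ℝ) ≤ Cg := le_max_right _ _
  set M : ℝ := ⨆ y, f y with hMdef
  set A₀ : Set X := {x : X | ∃ u : ℕ → X,
      Tendsto u atTop (𝓝 x) ∧ Tendsto (fun k => f (u k)) atTop (𝓝 M)} with hA₀def
  set Gd : X → ℝ := fun x => sSup {L : ℝ | ∃ u : ℕ → X,
      Tendsto u atTop (𝓝 x) ∧ Tendsto (fun k => f (u k)) atTop (𝓝 M) ∧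
      Filter.limsup (fun k => g (u k)) atTop = L} with hGddef
  set S : ℝ := sSup (Gd '' A₀) with hSdef
  -- boundedness basics
  have hfb : BddAbove (Set.range f) := ⟨Cf, by rintro _ ⟨x, rfl⟩; exact (abs_le.1 (hCf x)).2⟩
  have hfleM : ∀ x, f x ≤ M := fun x => le_ciSup hfb x
  have hbdd : ∀ (n : ℕ) (h' : X → ℝ) (C : ℝ), (∀ x, |h' x| ≤ C) →
      BddAbove (Set.range fun x => f x + t n * h' x) := by
    intro n h' C hC
    refine ⟨Cf + t n * C, ?_⟩
    rintro _ ⟨x, rfl⟩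
    have h1 : f x ≤ Cf := (abs_le.1 (hCf x)).2
    have h2 : h' x ≤ C := (abs_le.1 (hC x)).2
    have h3 : t n * h' x ≤ t n * C := mul_le_mul_of_nonneg_left h2 (ht_pos n).le
    show f x + t n * h' x ≤ Cf + t n * C
    linarith
  have hbddg : ∀ n, BddAbove (Set.range fun x => f x + t n * g x) :=
    fun n => hbdd n g Cg hCg
  -- the auxiliary sequence with `g` instead of `gs`
  set D : ℕ → ℝ := fun n => ((⨆ x, (f x + t n * g x)) - M) / t n with hDdef
  have htD : ∀ n, t n * D n = (⨆ x, (f x + t n * g x)) - M := by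
    intro n
    show t n * (((⨆ x, (f x + t n * g x)) - M) / t n) = _
    rw [mul_comm, div_mul_cancel₀ _ (ht_pos n).ne']
  -- limsup of g along a sequence is bounded
  have hgbU : ∀ u : ℕ → X, IsBoundedUnder (· ≤ ·) atTop (fun k => g (u k)) :=
    fun u => isBoundedUnder_of ⟨Cg, fun k => (abs_le.1 (hCg (u k))).2⟩
  have hgbL : ∀ u : ℕ → X, IsBoundedUnder (· ≥ ·) atTop (fun k => g (u k)) :=
    fun u => isBoundedUnder_of ⟨-Cg, fun k => (abs_le.1 (hCg (u k))).1⟩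
  -- Key lower bound : any admissible limsup L satisfies L ≤ D n for all n
  have hDgeL : ∀ (u : ℕ → X), Tendsto (fun k => f (u k)) atTop (𝓝 M) →
      ∀ n, Filter.limsup (fun k => g (u k)) atTop ≤ D n := by
    intro u huM n
    set L := Filter.limsup (fun k => g (u k)) atTop with hL
    by_contra hcon
    push_neg at hcon
    set ε : ℝ := (L - D n) / 2 with hε
    have hεpos : 0 < ε := by rw [hε]; linarith
    have h1 : ∃ᶠ k in atTop, L - ε < g (u k) :=
      frequently_lt_of_lt_limsup ((hgbL u).isCoboundedUnder_le) (by rw [hL]; linarith)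
    have h2 : ∀ᶠ k in atTop, M - t n * ε < f (u k) := by
      have := Metric.tendsto_atTop.1 huM (t n * ε) (mul_pos (ht_pos n) hεpos)
      obtain ⟨N, hN⟩ := this
      filter_upwards [eventually_ge_atTop N] with k hk
      have := hN k hk
      rw [Real.dist_eq, abs_lt] at this
      linarith [this.1]
    obtain ⟨k, hk1, hk2⟩ := (h1.and_eventually h2).exists
    have h3 : f (u k) + t n * g (u k) ≤ (⨆ x, (f x + t n * g x)) :=
      le_ciSup (hbddg n) (u k)
    have h4 : t n * (L - ε) ≤ t n * g (u k) :=
      mul_le_mul_of_nonneg_left hk1.le (ht_pos n).le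
    have h5 : (⨆ x, (f x + t n * g x)) - M = t n * D n := (htD n).symm
    have : t n * (L - D n) < 2 * (t n * ε) := by nlinarith
    rw [hε] at this
    nlinarith [ht_pos n]
  -- D is bounded above by Cg
  have hDle : ∀ n, D n ≤ Cg := by
    intro n
    have h1 : (⨆ x, (f x + t n * g x)) ≤ M + t n * Cg := by
      apply ciSup_le
      intro x
      have := mul_le_mul_of_nonneg_left (abs_le.1 (hCg x)).2 (ht_pos n).le
      linarith [hfleM x]
    rw [hDdef]
    rw [div_le_iff₀ (ht_pos n)]
    nlinarith
  -- a maximizing convergent sequence exists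
  have hone : ∃ x₀ : X, ∃ u : ℕ → X, Tendsto u atTop (𝓝 x₀) ∧
      Tendsto (fun k => f (u k)) atTop (𝓝 M) := by
    have hy : ∀ k : ℕ, ∃ y, M - 1 / (k + 1) < f y := by
      intro k
      apply exists_lt_of_lt_ciSup
      have : (0:ℝ) < 1 / (k + 1) := by positivity
      rw [← hMdef]; linarith
    choose y hy using hy
    have hfy : Tendsto (fun k => f (y k)) atTop (𝓝 M) := by
      have h0 : Tendsto (fun k : ℕ => M - 1 / (k + 1 : ℝ)) atTop (𝓝 (M - 0)) :=
        tendsto_const_nhds.sub tendsto_one_div_add_atTop_nhds_zero_nat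
      rw [sub_zero] at h0
      exact tendsto_of_tendsto_of_tendsto_of_le_of_le h0 tendsto_const_nhds
        (fun k => (hy k).le) (fun k => hfleM (y k))
    obtain ⟨x₀, φ, hφ, hconv⟩ := CompactSpace.tendsto_subseq y
    exact ⟨x₀, y ∘ φ, hconv, hfy.comp hφ.tendsto_atTop⟩
  obtain ⟨x₀, u₀, hu₀conv, hu₀M⟩ := hone
  have hx₀ : x₀ ∈ A₀ := ⟨u₀, hu₀conv, hu₀M⟩
  set L₀ : ℝ := Filter.limsup (fun k => g (u₀ k)) atTop with hL₀
  have hDgeL₀ : ∀ n, L₀ ≤ D n := hDgeL u₀ hu₀M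
  -- membership and bounds for the sets of limsups
  have hLsetmem : ∀ (x : X) (u : ℕ → X), Tendsto u atTop (𝓝 x) →
      Tendsto (fun k => f (u k)) atTop (𝓝 M) →
      Filter.limsup (fun k => g (u k)) atTop ∈ {L : ℝ | ∃ u : ℕ → X,
        Tendsto u atTop (𝓝 x) ∧ Tendsto (fun k => f (u k)) atTop (𝓝 M) ∧
        Filter.limsup (fun k => g (u k)) atTop = L} :=
    fun x u h1 h2 => ⟨u, h1, h2, rfl⟩
  have hLsetbdd : ∀ x : X, BddAbove {L : ℝ | ∃ u : ℕ → X,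
      Tendsto u atTop (𝓝 x) ∧ Tendsto (fun k => f (u k)) atTop (𝓝 M) ∧
      Filter.limsup (fun k => g (u k)) atTop = L} := by
    intro x
    refine ⟨Cg, ?_⟩
    rintro _ ⟨u, -, -, rfl⟩
    exact limsup_le_of_le ((hgbL u).isCoboundedUnder_le)
      (Eventually.of_forall fun k => (abs_le.1 (hCg (u k))).2)
  have hGdle : ∀ x ∈ A₀, Gd x ≤ Cg := by
    rintro x ⟨u, h1, h2⟩
    rw [hGddef]
    apply csSup_le ⟨_, hLsetmem x u h1 h2⟩
    rintro _ ⟨u', -, -, rfl⟩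
    exact limsup_le_of_le ((hgbL u').isCoboundedUnder_le)
      (Eventually.of_forall fun k => (abs_le.1 (hCg (u' k))).2)
  have himgne : (Gd '' A₀).Nonempty := ⟨Gd x₀, Set.mem_image_of_mem Gd hx₀⟩
  have himgbdd : BddAbove (Gd '' A₀) := by
    refine ⟨Cg, ?_⟩
    rintro _ ⟨x, hx, rfl⟩
    exact hGdle x hx
  -- boundedness of D
  have hDbU : IsBoundedUnder (· ≤ ·) atTop D := isBoundedUnder_of ⟨Cg, hDle⟩
  have hDbL : IsBoundedUnder (· ≥ ·) atTop D := isBoundedUnder_of ⟨L₀, hDgeL₀⟩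
  -- lower bound: S ≤ liminf D
  have hliminf : S ≤ Filter.liminf D atTop := by
    rw [hSdef]
    apply csSup_le himgne
    rintro _ ⟨x, ⟨u, h1, h2⟩, rfl⟩
    rw [hGddef]
    apply csSup_le ⟨_, hLsetmem x u h1 h2⟩
    rintro _ ⟨u', -, h2', rfl⟩
    exact le_liminf_of_le (hDbU.isCoboundedUnder_ge)
      (Eventually.of_forall (hDgeL u' h2'))
  -- upper bound: limsup D ≤ S, via near-maximizers and compactness
  have hlimsup : Filter.limsup D atTop ≤ S := by
    by_contra hcon
    push_neg at hcon
    -- near maximizers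
    have hx : ∀ n : ℕ, ∃ x : X,
        (⨆ x, (f x + t n * g x)) - t n * t n < f x + t n * g x := by
      intro n
      apply exists_lt_of_lt_ciSup
      have := mul_pos (ht_pos n) (ht_pos n)
      linarith
    choose xs hxs using hx
    -- sup is not much below M
    have hsupge : ∀ n, M - t n * Cg ≤ (⨆ x, (f x + t n * g x)) := by
      intro n
      have : M ≤ (⨆ x, (f x + t n * g x)) + t n * Cg := by
        rw [hMdef]
        apply ciSup_le
        intro x
        have h1 : f x + t n * g x ≤ (⨆ x, (f x + t n * g x)) := le_ciSup (hbddg n) x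
        have h2 : t n * g x ≥ t n * (-Cg) :=
          mul_le_mul_of_nonneg_left (abs_le.1 (hCg x)).1 (ht_pos n).le
        nlinarith
      linarith
    -- f along near-maximizers tends to M
    have hfxs : Tendsto (fun n => f (xs n)) atTop (𝓝 M) := by
      have hlow : ∀ n, M - t n * (2 * Cg + t n) ≤ f (xs n) := by
        intro n
        have h1 := hxs n
        have h2 := hsupge n
        have h3 : t n * g (xs n) ≤ t n * Cg :=
          mul_le_mul_of_nonneg_left (abs_le.1 (hCg (xs n))).2 (ht_pos n).le
        nlinarith
      have h0 : Tendsto (fun n => M - t n * (2 * Cg + t n)) atTop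
          (𝓝 (M - 0 * (2 * Cg + 0))) :=
        tendsto_const_nhds.sub (ht.mul (tendsto_const_nhds.add ht))
      norm_num at h0
      exact tendsto_of_tendsto_of_tendsto_of_le_of_le h0 tendsto_const_nhds
        hlow (fun n => hfleM (xs n))
    -- D n ≤ g(xs n) + t n
    have hDlex : ∀ n, D n ≤ g (xs n) + t n := by
      intro n
      have h1 := hxs n
      have h2 : f (xs n) ≤ M := hfleM (xs n)
      rw [hDdef, div_le_iff₀ (ht_pos n)]
      nlinarith
    -- extract a frequently-large subsequence
    set S' : ℝ := (S + Filter.limsup D atTop) / 2 with hS'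
    have hS'gt : S < S' := by rw [hS']; linarith
    have hfreq : ∃ᶠ n in atTop, S' < D n :=
      frequently_lt_of_lt_limsup (hDbL.isCoboundedUnder_le) (by rw [hS']; linarith)
    obtain ⟨φ, hφ, hφS⟩ := extraction_of_frequently_atTop hfreq
    obtain ⟨xinf, ψ, hψ, hψconv⟩ := CompactSpace.tendsto_subseq (xs ∘ φ)
    set v : ℕ → ℕ := φ ∘ ψ with hv
    have hvmono : StrictMono v := hφ.comp hψ
    have hfv : Tendsto (fun j => f (xs (v j))) atTop (𝓝 M) :=
      hfxs.comp hvmono.tendsto_atTop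
    have hxv : Tendsto (fun j => xs (v j)) atTop (𝓝 xinf) := hψconv
    have hxinf : xinf ∈ A₀ := ⟨fun j => xs (v j), hxv, hfv⟩
    set L : ℝ := Filter.limsup (fun j => g (xs (v j))) atTop with hL
    have hLmem := hLsetmem xinf (fun j => xs (v j)) hxv hfv
    have hLle : L ≤ S := by
      have h1 : L ≤ Gd xinf := le_csSup (hLsetbdd xinf) hLmem
      have h2 : Gd xinf ≤ S := le_csSup himgbdd (Set.mem_image_of_mem Gd hxinf)
      linarith
    -- but g along the subsequence is eventually > S', so L ≥ ... > S
    set ε : ℝ := S' - S with hεdef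
    have hεpos : 0 < ε := by rw [hεdef]; linarith
    have htv : Tendsto (fun j => t (v j)) atTop (𝓝 0) := ht.comp hvmono.tendsto_atTop
    have hev : ∀ᶠ j in atTop, t (v j) < ε / 2 := by
      have := Metric.tendsto_atTop.1 htv (ε / 2) (by linarith)
      obtain ⟨N, hN⟩ := this
      filter_upwards [eventually_ge_atTop N] with j hj
      have := hN j hj
      rw [Real.dist_eq, sub_zero, abs_lt] at this
      exact this.2
    have hgev : ∀ᶠ j in atTop, S + ε / 2 ≤ g (xs (v j)) := by
      filter_upwards [hev] with j hj
      have h1 : S' < D (v j) := hφS (ψ j)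
      have h2 : D (v j) ≤ g (xs (v j)) + t (v j) := hDlex (v j)
      rw [hεdef]
      linarith
    have : S + ε / 2 ≤ L :=
      le_limsup_of_frequently_le hgev.frequently (hgbU _)
    linarith
  have hD : Tendsto D atTop (𝓝 S) :=
    tendsto_of_le_liminf_of_limsup_le hliminf hlimsup hDbU hDbL
  -- transfer to gs via uniform convergence
  have hdiff : Tendsto (fun n => ((⨆ x, (f x + t n * gs n x)) - M) / t n - D n)
      atTop (𝓝 0) := by
    rw [NormedAddCommGroup.tendsto_nhds_zero]
    intro ε hε
    have hev := (Metric.tendstoUniformly_iff.1 hgs) (ε / 2) (by linarith)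
    filter_upwards [hev] with n hn
    have hclose : ∀ x, |gs n x - g x| ≤ ε / 2 := by
      intro x
      have h := hn x
      rw [Real.dist_eq] at h
      rw [abs_sub_comm]
      linarith [le_of_lt h]
    obtain ⟨Cn, hCn⟩ := hgs_bdd n
    have hbgs := hbdd n (gs n) Cn hCn
    have h1 : (⨆ x, (f x + t n * gs n x)) ≤ (⨆ x, (f x + t n * g x)) + t n * (ε / 2) := by
      apply ciSup_le
      intro x
      have h3 : f x + t n * g x ≤ (⨆ x, (f x + t n * g x)) := le_ciSup (hbddg n) x
      have h4 : t n * gs n x ≤ t n * g x + t n * (ε / 2) := by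
        have := (abs_le.1 (hclose x)).2
        nlinarith [ht_pos n]
      linarith
    have h2 : (⨆ x, (f x + t n * g x)) ≤ (⨆ x, (f x + t n * gs n x)) + t n * (ε / 2) := by
      apply ciSup_le
      intro x
      have h3 : f x + t n * gs n x ≤ (⨆ x, (f x + t n * gs n x)) := le_ciSup hbgs x
      have h4 : t n * g x ≤ t n * gs n x + t n * (ε / 2) := by
        have := (abs_le.1 (hclose x)).1
        nlinarith [ht_pos n]
      linarith
    have heq : ((⨆ x, (f x + t n * gs n x)) - M) / t n - D n
        = ((⨆ x, (f x + t n * gs n x)) - (⨆ x, (f x + t n * g x))) / t n := by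
      rw [hDdef]
      ring
    rw [Real.norm_eq_abs, heq, abs_div, abs_of_pos (ht_pos n), div_lt_iff₀ (ht_pos n)]
    have habs : |(⨆ x, (f x + t n * gs n x)) - (⨆ x, (f x + t n * g x))| ≤ t n * (ε / 2) :=
      abs_le.2 ⟨by linarith, by linarith⟩
    nlinarith [ht_pos n]
  have hE : Tendsto (fun n => ((⨆ x, (f x + t n * gs n x)) - M) / t n) atTop (𝓝 S) := by
    have h := hD.add hdiff
    rw [add_zero] at h
    exact h.congr (fun n => by ring)
  exact hE
end

section
/- Let (X, d) be a compact metric space, f ∈ ℓ^∞(X) arbitrary, and g: X → ℝ continuous. Then the Hadamard directional derivative of the supremum functional σ at f in direction g equals sup_{A_0(f)} g, where A_0(f) = {x ∈ X : ∃ x_n → x with f(x_n) → sup_X f}. In particular, for every t_n ↓ 0 and h_n → g in sup norm, (sup_X(f + t_n h_n) − sup_X f)/t_n → sup_{A_0(f)} g. -/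
/-!
For `y ∈ A₀(f)` and a maximizing sequence `u_k → y`, the values `f (u_k) + t h (u_k)` come within
`o(t)` of `sup f + t g(y)`, which gives the lower bound. For the upper bound, compactness shows
that every point where `f` is `δ`-close to its supremum has `g ≤ sup_{A₀(f)} g + ε` (otherwise a
subsequence of bad near-maximizers would converge to a point of `A₀(f)` with larger `g`); at the
remaining points `f` stays `δ` below its supremum, which a perturbation of size `O(t)` cannot
overcome.
-/

open Filter Topology Set

theorem TendstoUniformly.eventually_bddAbove_range {X ι : Type*} {l : Filter ι}
    {h : ι → X → ℝ} {g : X → ℝ} (hh : TendstoUniformly h g l) (hg : BddAbove (range g)) :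
    ∀ᶠ n in l, BddAbove (range (h n)) := by
  obtain ⟨M, hM⟩ := hg
  filter_upwards [Metric.tendstoUniformly_iff.1 hh 1 one_pos] with n hn
  refine ⟨M + 1, forall_mem_range.2 fun x => ?_⟩
  have hx := hn x
  rw [Real.dist_eq, abs_lt] at hx
  linarith [hM (mem_range_self x)]

section MaximizingLimits

variable {X : Type*} [TopologicalSpace X]

/-- The paper's `A₀(f)`. -/
def maximizingLimits (f : X → ℝ) : Set X :=
  {x | ∃ u : ℕ → X, Tendsto u atTop (𝓝 x) ∧ Tendsto (fun k => f (u k)) atTop (𝓝 (⨆ y, f y))}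

theorem eventually_lt_iSup_add_mul_sub_iSup_div {f g : X → ℝ} (hf : BddAbove (range f))
    {t : ℕ → ℝ} (ht_pos : ∀ n, 0 < t n) {h : ℕ → X → ℝ} (hh : TendstoUniformly h g atTop)
    (hh_bdd : ∀ᶠ n in atTop, BddAbove (range (h n))) {y : X} (hy : y ∈ maximizingLimits f)
    (hgy : ContinuousAt g y) {a : ℝ} (ha : a < g y) :
    ∀ᶠ n in atTop, a < ((⨆ x, (f x + t n * h n x)) - ⨆ x, f x) / t n := by
  obtain ⟨u, hu, hfu⟩ := hy
  set η := (g y - a) / 3 with hη_def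
  have hη : 0 < η := by linarith
  have hgu : ∀ᶠ k in atTop, g y - η < g (u k) :=
    (hgy.tendsto.comp hu).eventually (lt_mem_nhds (by linarith))
  filter_upwards [hh_bdd, Metric.tendstoUniformly_iff.1 hh η hη] with n hbdd hhn
  have htη : 0 < t n * η := mul_pos (ht_pos n) hη
  have hfu' : ∀ᶠ k in atTop, (⨆ x, f x) - t n * η < f (u k) :=
    hfu.eventually (lt_mem_nhds (by linarith))
  obtain ⟨k, hfk, hgk⟩ := (hfu'.and hgu).exists
  have hhk : g (u k) - η < h n (u k) := by
    have := hhn (u k)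
    rw [Real.dist_eq, abs_lt] at this
    linarith
  have hsup : f (u k) + t n * h n (u k) ≤ ⨆ x, (f x + t n * h n x) := by
    have hth : BddAbove (range fun x => t n • h n x) := by
      rw [range_smul]
      exact hbdd.smul_of_nonneg (ht_pos n).le
    exact le_ciSup (f := fun x => f x + t n * h n x) (hf.range_add hth) (u k)
  rw [lt_div_iff₀ (ht_pos n)]
  nlinarith [mul_lt_mul_of_pos_left hhk (ht_pos n), mul_lt_mul_of_pos_left hgk (ht_pos n), hη_def]

variable [CompactSpace X] [FirstCountableTopology X] {f : X → ℝ}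

theorem exists_subseq_tendsto_mem_maximizingLimits {v : ℕ → X}
    (hv : Tendsto (fun n => f (v n)) atTop (𝓝 (⨆ y, f y))) :
    ∃ y ∈ maximizingLimits f, ∃ φ : ℕ → ℕ, StrictMono φ ∧ Tendsto (v ∘ φ) atTop (𝓝 y) := by
  obtain ⟨y, φ, hφ, hvy⟩ := CompactSpace.tendsto_subseq v
  exact ⟨y, ⟨v ∘ φ, hvy, hv.comp hφ.tendsto_atTop⟩, φ, hφ, hvy⟩

theorem maximizingLimits_nonempty [Nonempty X] (hf : BddAbove (range f)) :
    (maximizingLimits f).Nonempty := by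
  obtain ⟨w, -, hw, hwf⟩ := exists_seq_tendsto_sSup (range_nonempty f) hf
  choose v hv using hwf
  obtain ⟨y, hy, -⟩ := exists_subseq_tendsto_mem_maximizingLimits (f := f) (v := v)
    (by simp only [hv]; exact hw)
  exact ⟨y, hy⟩

theorem exists_pos_forall_le_sSup_image_maximizingLimits_add (hf : BddAbove (range f))
    {g : X → ℝ} (hg : Continuous g) {ε : ℝ} (hε : 0 < ε) :
    ∃ δ > 0, ∀ x, (⨆ y, f y) - δ ≤ f x → g x ≤ sSup (g '' maximizingLimits f) + ε := by
  by_contra! hcon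
  choose v hfv hgv using fun n : ℕ => hcon (1 / (n + 1)) Nat.one_div_pos_of_nat
  have hv : Tendsto (fun n => f (v n)) atTop (𝓝 (⨆ y, f y)) := by
    refine tendsto_of_tendsto_of_tendsto_of_le_of_le ?_ tendsto_const_nhds hfv
      fun n => le_ciSup hf _
    simpa using tendsto_const_nhds.sub (tendsto_one_div_add_atTop_nhds_zero_nat (𝕜 := ℝ))
  obtain ⟨y, hy, φ, hφ, hvy⟩ := exists_subseq_tendsto_mem_maximizingLimits hv
  have hgy : sSup (g '' maximizingLimits f) + ε ≤ g y :=
    ge_of_tendsto ((hg.tendsto y).comp hvy) (Eventually.of_forall fun n => (hgv (φ n)).le)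
  have := le_csSup ((isCompact_range hg).bddAbove.mono (image_subset_range _ _))
    (mem_image_of_mem g hy)
  linarith

theorem eventually_iSup_add_mul_sub_iSup_div_lt [Nonempty X] (hf : BddAbove (range f))
    {g : X → ℝ} (hg : Continuous g) {t : ℕ → ℝ} (ht_pos : ∀ n, 0 < t n)
    (ht : Tendsto t atTop (𝓝 0)) {h : ℕ → X → ℝ} (hh : TendstoUniformly h g atTop) {b : ℝ}
    (hb : sSup (g '' maximizingLimits f) < b) :
    ∀ᶠ n in atTop, ((⨆ x, (f x + t n * h n x)) - ⨆ x, f x) / t n < b := by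
  set S := sSup (g '' maximizingLimits f)
  set η := (b - S) / 3 with hη_def
  have hη : 0 < η := by linarith
  obtain ⟨δ, hδ, hfg⟩ := exists_pos_forall_le_sSup_image_maximizingLimits_add hf hg hη
  obtain ⟨M, hM⟩ := (isCompact_range hg).bddAbove
  have htδ : ∀ᶠ n in atTop, t n * (M - S - η) < δ := by
    simpa using (ht.mul_const (M - S - η)).eventually (gt_mem_nhds (by rwa [zero_mul]))
  filter_upwards [htδ, Metric.tendstoUniformly_iff.1 hh η hη] with n htn hhn
  have hsup : (⨆ x, (f x + t n * h n x)) ≤ (⨆ x, f x) + t n * (S + 2 * η) := by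
    refine ciSup_le fun x => ?_
    have hhx : h n x < g x + η := by
      have := hhn x
      rw [Real.dist_eq, abs_lt] at this
      linarith
    rcases le_or_gt ((⨆ y, f y) - δ) (f x) with hx | hx
    · have := mul_le_mul_of_nonneg_left (show h n x ≤ S + 2 * η by linarith [hfg x hx])
        (ht_pos n).le
      linarith [le_ciSup hf x]
    · have := mul_le_mul_of_nonneg_left (show h n x ≤ M + η by linarith [hM (mem_range_self x)])
        (ht_pos n).le
      linarith
  rw [div_lt_iff₀ (ht_pos n)]
  nlinarith [ht_pos n, hη_def]

end MaximizingLimits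

theorem stmt_6_general {X : Type*} [MetricSpace X] [CompactSpace X] [Nonempty X]
    (f : X → ℝ) (hf : ∃ C, ∀ x, |f x| ≤ C)
    (g : X → ℝ) (hgc : Continuous g)
    (t : ℕ → ℝ) (hs : ℕ → X → ℝ)
    (ht_pos : ∀ n, 0 < t n) (ht : Tendsto t atTop (𝓝 0))
    (hhs : TendstoUniformly hs g atTop) :
    Tendsto (fun n => ((⨆ x, (f x + t n * hs n x)) - ⨆ x, f x) / t n) atTop
      (𝓝 (sSup (g '' {x : X | ∃ u : ℕ → X,
          Tendsto u atTop (𝓝 x) ∧ Tendsto (fun k => f (u k)) atTop (𝓝 (⨆ y, f y))}))) := by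
  obtain ⟨C, hC⟩ := hf
  have hf_bdd : BddAbove (range f) := ⟨C, forall_mem_range.2 fun x => (abs_le.1 (hC x)).2⟩
  have hhs_bdd := hhs.eventually_bddAbove_range (isCompact_range hgc).bddAbove
  refine tendsto_order.2 ⟨fun a ha => ?_, fun b hb =>
    eventually_iSup_add_mul_sub_iSup_div_lt hf_bdd hgc ht_pos ht hhs hb⟩
  obtain ⟨_, ⟨y, hy, rfl⟩, hay⟩ :=
    exists_lt_of_lt_csSup ((maximizingLimits_nonempty hf_bdd).image g) ha
  exact eventually_lt_iSup_add_mul_sub_iSup_div hf_bdd ht_pos hhs hhs_bdd hy hgc.continuousAt hay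

/-- On a compact metric space, for bounded `f` and continuous `g`, the Hadamard directional
derivative of the supremum functional at `f` in direction `g` is `sup_{A_0(f)} g`. -/
theorem stmt_6 {X : Type*} [MetricSpace X] [CompactSpace X] [Nonempty X]
    (f : X → ℝ) (hf : ∃ C, ∀ x, |f x| ≤ C)
    (g : X → ℝ) (hgc : Continuous g)
    (t : ℕ → ℝ) (hs : ℕ → X → ℝ)
    (ht_anti : Antitone t) (ht_pos : ∀ n, 0 < t n) (ht : Tendsto t atTop (𝓝 0))
    (hhs_bdd : ∀ n, ∃ C, ∀ x, |hs n x| ≤ C)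
    (hhs : TendstoUniformly hs g atTop) :
    Tendsto (fun n => ((⨆ x, (f x + t n * hs n x)) - ⨆ x, f x) / t n) atTop
      (𝓝 (sSup (g '' {x : X | ∃ u : ℕ → X,
          Tendsto u atTop (𝓝 x) ∧ Tendsto (fun k => f (u k)) atTop (𝓝 (⨆ y, f y))}))) :=
  stmt_6_general f hf g hgc t hs ht_pos ht hhs
end

section
/- Let (X, d) be a compact metric space and f, g ∈ C(X) with f continuous and not identically zero. Then the sup-norm functional δ(h) = ‖h‖_∞ is Hadamard directionally differentiable at f tangentially to C(X), with δ'_f(g) = sup_{M^+(|f|)} ( g · sgn(f) ), where M^+(|f|) = {x ∈ X : |f(x)| = ‖f‖_∞}. -/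
open Filter Topology

lemma aux_sign_abs_le_one (a : ℝ) : |Real.sign a| ≤ 1 := by
  rcases lt_trichotomy a 0 with h|h|h
  · rw [Real.sign_of_neg h]; norm_num
  · rw [h, Real.sign_zero]; norm_num
  · rw [Real.sign_of_pos h]; norm_num

lemma aux_sign_mul_self (a : ℝ) : Real.sign a * a = |a| := by
  rcases lt_trichotomy a 0 with h|h|h
  · rw [Real.sign_of_neg h, abs_of_neg h]; ring
  · simp [h]
  · rw [Real.sign_of_pos h, abs_of_pos h]; ring

lemma aux_sign_eq_div (a : ℝ) (h : a ≠ 0) : Real.sign a = a / |a| := by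
  rcases h.lt_or_gt with h|h
  · rw [Real.sign_of_neg h, abs_of_neg h]
    field_simp
  · rw [Real.sign_of_pos h, abs_of_pos h]
    field_simp

lemma aux_abs_add_mul_eq (a b t : ℝ) (ht : 0 ≤ t) (h : t * |b| < |a|) :
    |a + t * b| = |a| + t * (Real.sign a * b) := by
  have htb : |t * b| = t * |b| := by rw [abs_mul, abs_of_nonneg ht]
  rcases lt_trichotomy a 0 with ha|ha|ha
  · have h1 : a + t * b < 0 := by
      have h2 := le_abs_self (t * b)
      rw [htb] at h2
      have h3 := abs_of_neg ha
      nlinarith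
    rw [Real.sign_of_neg ha, abs_of_neg ha, abs_of_neg h1]; ring
  · subst ha
    simp only [abs_zero] at h
    nlinarith [abs_nonneg b, mul_nonneg ht (abs_nonneg b)]
  · have h1 : 0 < a + t * b := by
      have h2 := neg_abs_le (t * b)
      rw [htb] at h2
      have h3 := abs_of_pos ha
      nlinarith
    rw [Real.sign_of_pos ha, abs_of_pos ha, abs_of_pos h1]; ring

/-- On a compact metric space, the sup-norm functional `δ(h) = ‖h‖_∞` is Hadamard
directionally differentiable at a continuous `f ≠ 0` tangentially to `C(X)`, with derivative
`δ'_f(g) = sup_{M⁺(|f|)} g · sgn(f)`. -/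
theorem stmt_7 {X : Type*} [MetricSpace X] [CompactSpace X] [Nonempty X]
    (f g : X → ℝ) (hfc : Continuous f) (hgc : Continuous g) (hf0 : ∃ x, f x ≠ 0)
    (t : ℕ → ℝ) (hs : ℕ → X → ℝ)
    (ht_anti : Antitone t) (ht_pos : ∀ n, 0 < t n) (ht : Tendsto t atTop (𝓝 0))
    (hhs_bdd : ∀ n, ∃ C, ∀ x, |hs n x| ≤ C)
    (hhs : TendstoUniformly hs g atTop) :
    Tendsto (fun n => ((⨆ x, |f x + t n * hs n x|) - ⨆ x, |f x|) / t n) atTop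
      (𝓝 (sSup ((fun x => g x * Real.sign (f x)) ''
        {x : X | |f x| = ⨆ y, |f y|}))) := by
  have hfabs : Continuous fun x => |f x| := hfc.abs
  set M : ℝ := ⨆ y, |f y| with hM_def
  have hBf : BddAbove (Set.range fun x => |f x|) := (isCompact_range hfabs).bddAbove
  have hle_M : ∀ x, |f x| ≤ M := fun x => le_ciSup hBf x
  obtain ⟨x₀, hx₀⟩ : ∃ x₀, ∀ x, |f x| ≤ |f x₀| := by
    obtain ⟨x₀, -, h⟩ := isCompact_univ.exists_isMaxOn Set.univ_nonempty hfabs.continuousOn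
    exact ⟨x₀, fun x => h (Set.mem_univ x)⟩
  have hx₀M : |f x₀| = M := le_antisymm (hle_M x₀) (ciSup_le hx₀)
  have hMpos : 0 < M := by
    obtain ⟨x, hx⟩ := hf0
    exact lt_of_lt_of_le (abs_pos.2 hx) (hle_M x)
  -- bound on g
  have hBg : BddAbove (Set.range fun x => |g x|) := (isCompact_range hgc.abs).bddAbove
  obtain ⟨Cg, hCg'⟩ := hBg
  have hCg : ∀ x, |g x| ≤ Cg := fun x => hCg' ⟨x, rfl⟩
  have hCg0 : 0 ≤ Cg := le_trans (abs_nonneg _) (hCg (Classical.arbitrary X))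
  set S := {x : X | |f x| = M} with hS_def
  set φ := fun x => g x * Real.sign (f x) with hφ_def
  set D := sSup (φ '' S) with hD_def
  have hSne : S.Nonempty := ⟨x₀, hx₀M⟩
  have hφbd : ∀ x, |φ x| ≤ Cg := by
    intro x
    have h1 : |φ x| = |g x| * |Real.sign (f x)| := abs_mul _ _
    have h2 := aux_sign_abs_le_one (f x)
    have h3 := hCg x
    have h4 := abs_nonneg (g x)
    have h5 := abs_nonneg (Real.sign (f x))
    nlinarith
  have hDbdd : BddAbove (φ '' S) := by
    refine ⟨Cg, ?_⟩
    rintro y ⟨x, -, rfl⟩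
    exact (abs_le.1 (hφbd x)).2
  have hφleD : ∀ x ∈ S, φ x ≤ D := fun x hx => le_csSup hDbdd ⟨x, hx, rfl⟩
  have hDle : D ≤ Cg := csSup_le (hSne.image φ) (by rintro y ⟨x, -, rfl⟩; exact (abs_le.1 (hφbd x)).2)
  -- per-n boundedness of the perturbed sup
  have hBdd : ∀ n, BddAbove (Set.range fun x => |f x + t n * hs n x|) := by
    intro n
    obtain ⟨C, hC⟩ := hhs_bdd n
    refine ⟨M + |t n| * C, ?_⟩
    rintro y ⟨x, rfl⟩
    calc |f x + t n * hs n x| ≤ |f x| + |t n * hs n x| := abs_add_le _ _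
      _ ≤ M + |t n| * C := by
          rw [abs_mul]
          exact add_le_add (hle_M x) (mul_le_mul_of_nonneg_left (hC x) (abs_nonneg _))
  rw [tendsto_order]
  constructor
  · -- lower bound
    intro a ha
    obtain ⟨y, ⟨xs, hxsS, rfl⟩, hy⟩ := exists_lt_of_lt_csSup (hSne.image φ) ha
    have hε : (0:ℝ) < φ xs - a := by linarith
    have hE1 := Metric.tendstoUniformly_iff.1 hhs _ hε
    filter_upwards [hE1] with n hn
    have htn := ht_pos n
    rw [lt_div_iff₀ htn]
    -- the sup is at least the value at xs
    have h1 : |f xs + t n * hs n xs| ≤ ⨆ x, |f x + t n * hs n x| := le_ciSup (hBdd n) xs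
    have h2 : Real.sign (f xs) * (f xs + t n * hs n xs) ≤ |f xs + t n * hs n xs| := by
      have := le_abs_self (Real.sign (f xs) * (f xs + t n * hs n xs))
      rw [abs_mul] at this
      nlinarith [aux_sign_abs_le_one (f xs), abs_nonneg (f xs + t n * hs n xs)]
    have h3 : Real.sign (f xs) * (f xs + t n * hs n xs)
        = M + t n * (Real.sign (f xs) * hs n xs) := by
      have hsm := aux_sign_mul_self (f xs)
      have hfxs : |f xs| = M := hxsS
      calc Real.sign (f xs) * (f xs + t n * hs n xs)
          = Real.sign (f xs) * f xs + t n * (Real.sign (f xs) * hs n xs) := by ring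
        _ = M + t n * (Real.sign (f xs) * hs n xs) := by rw [hsm, hfxs]
    have h4 : Real.sign (f xs) * hs n xs > a := by
      have hd := hn xs
      rw [Real.dist_eq] at hd
      have habs : |Real.sign (f xs) * (hs n xs - g xs)| ≤ |hs n xs - g xs| := by
        rw [abs_mul]
        nlinarith [aux_sign_abs_le_one (f xs), abs_nonneg (hs n xs - g xs)]
      have h5 : Real.sign (f xs) * (hs n xs - g xs) ≥ -|hs n xs - g xs| := by
        nlinarith [neg_abs_le (Real.sign (f xs) * (hs n xs - g xs))]
      have h6 : |hs n xs - g xs| = |g xs - hs n xs| := abs_sub_comm _ _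
      have hφxs : φ xs = g xs * Real.sign (f xs) := rfl
      nlinarith
    have hmul := mul_lt_mul_of_pos_left h4 htn
    linarith
  · -- upper bound
    intro a ha
    set ε := a - D with hε_def
    have hε : 0 < ε := by simp only [hε_def]; linarith
    -- the open neighborhood U of S
    set ψ := fun x => g x * (f x / |f x|) with hψ_def
    set V := {x : X | M / 2 < |f x|} with hV_def
    have hVopen : IsOpen V := isOpen_lt continuous_const hfabs
    have hVne : ∀ x ∈ V, f x ≠ 0 := by
      intro x hx h0
      simp only [hV_def, Set.mem_setOf_eq, h0, abs_zero] at hx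
      linarith
    have hψcont : ContinuousOn ψ V :=
      hgc.continuousOn.mul (hfc.continuousOn.div hfabs.continuousOn
        fun x hx => by
          have := hVne x hx
          simpa [abs_eq_zero] using this)
    set U := V ∩ ψ ⁻¹' Set.Iio (D + ε / 2) with hU_def
    have hUopen : IsOpen U := hψcont.isOpen_inter_preimage hVopen isOpen_Iio
    have hψφ : ∀ x, f x ≠ 0 → ψ x = φ x := by
      intro x hx
      simp only [hψ_def, hφ_def, aux_sign_eq_div (f x) hx]
    have hSU : S ⊆ U := by
      intro x hx
      have hfx : |f x| = M := hx
      have hne : f x ≠ 0 := by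
        intro h0; rw [h0, abs_zero] at hfx; linarith
      constructor
      · show M / 2 < |f x|; rw [hfx]; linarith
      · show ψ x < D + ε / 2
        rw [hψφ x hne]
        have := hφleD x hx
        linarith
    -- bound |f| away from M outside U
    obtain ⟨s', hs'M, hs'bd⟩ : ∃ s', s' < M ∧ ∀ x ∉ U, |f x| ≤ s' := by
      rcases Set.eq_empty_or_nonempty Uᶜ with hKe | hKne
      · exact ⟨0, hMpos, fun x hx => absurd (hKe ▸ hx : x ∈ (∅ : Set X)) (Set.notMem_empty x)⟩
      · obtain ⟨z, hzK, hz⟩ := (hUopen.isClosed_compl.isCompact).exists_isMaxOn hKne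
          hfabs.continuousOn
        refine ⟨|f z|, ?_, fun x hx => hz hx⟩
        refine lt_of_le_of_ne (hle_M z) fun h => hzK (hSU h)
    set η := M - s' with hη_def
    have hηpos : 0 < η := by simp only [hη_def]; linarith
    set C := Cg + ε with hC_def
    -- eventually facts
    have hE1 := Metric.tendstoUniformly_iff.1 hhs (ε / 4) (by linarith)
    have hE2 : ∀ᶠ n in atTop, t n * C < M / 2 := by
      have h0 : Tendsto (fun n => t n * C) atTop (𝓝 0) := by
        simpa using ht.mul_const C
      exact h0.eventually_lt_const (by linarith)
    have hE3 : ∀ᶠ n in atTop, t n * (C - (D + 3 * ε / 4)) < η := by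
      have h0 : Tendsto (fun n => t n * (C - (D + 3 * ε / 4))) atTop (𝓝 0) := by
        simpa using ht.mul_const (C - (D + 3 * ε / 4))
      exact h0.eventually_lt_const hηpos
    filter_upwards [hE1, hE2, hE3] with n hn1 hn2 hn3
    have htn := ht_pos n
    rw [div_lt_iff₀ htn]
    have hhsC : ∀ x, |hs n x| ≤ C := by
      intro x
      have hd := hn1 x
      rw [Real.dist_eq] at hd
      have := hCg x
      have habs : |hs n x| ≤ |g x| + |g x - hs n x| := by
        calc |hs n x| = |g x - (g x - hs n x)| := by ring_nf
          _ ≤ |g x| + |g x - hs n x| := abs_sub _ _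
      simp only [hC_def]
      linarith
    have hkey : ∀ x, |f x + t n * hs n x| ≤ M + t n * (D + 3 * ε / 4) := by
      intro x
      by_cases hxU : x ∈ U
      · obtain ⟨hxV, hxψ⟩ := hxU
        have hfxV : M / 2 < |f x| := hxV
        have hne : f x ≠ 0 := hVne x hxV
        have hsmall : t n * |hs n x| < |f x| :=
          lt_of_le_of_lt (mul_le_mul_of_nonneg_left (hhsC x) (le_of_lt htn))
            (lt_trans hn2 hfxV)
        rw [aux_abs_add_mul_eq (f x) (hs n x) (t n) (le_of_lt htn) hsmall]
        have hsgh : Real.sign (f x) * hs n x ≤ φ x + ε / 4 := by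
          have hd := hn1 x
          rw [Real.dist_eq] at hd
          have habs : Real.sign (f x) * (hs n x - g x) ≤ |hs n x - g x| := by
            nlinarith [le_abs_self (Real.sign (f x) * (hs n x - g x)),
              abs_mul (Real.sign (f x)) (hs n x - g x),
              aux_sign_abs_le_one (f x), abs_nonneg (hs n x - g x)]
          have h6 : |hs n x - g x| = |g x - hs n x| := abs_sub_comm _ _
          have hφx : φ x = g x * Real.sign (f x) := rfl
          nlinarith
        have hφx : φ x < D + ε / 2 := by
          have := hψφ x hne
          rw [← this]
          exact hxψ
        have hstep : Real.sign (f x) * hs n x ≤ D + 3 * ε / 4 := by linarith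
        have hmul := mul_le_mul_of_nonneg_left hstep (le_of_lt htn)
        have := hle_M x
        linarith
      · have h1 : |f x + t n * hs n x| ≤ |f x| + t n * |hs n x| := by
          calc |f x + t n * hs n x| ≤ |f x| + |t n * hs n x| := abs_add_le _ _
            _ = |f x| + t n * |hs n x| := by rw [abs_mul, abs_of_pos htn]
        have h2 : t n * |hs n x| ≤ t n * C :=
          mul_le_mul_of_nonneg_left (hhsC x) (le_of_lt htn)
        have h3 := hs'bd x hxU
        simp only [hη_def] at hn3
        have hexp : t n * (C - (D + 3 * ε / 4)) = t n * C - t n * (D + 3 * ε / 4) := by ring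
        nlinarith
    have hsup : (⨆ x, |f x + t n * hs n x|) ≤ M + t n * (D + 3 * ε / 4) :=
      ciSup_le hkey
    have hlt : D + 3 * ε / 4 < a := by simp only [hε_def]; linarith
    have hmul := mul_lt_mul_of_pos_left hlt htn
    linarith
end

section
/- Let (X, d) be a compact metric space and f ∈ ℓ^∞(X). The supremum functional σ is fully Hadamard differentiable at f tangentially to C(X) (i.e. its directional derivative is linear on C(X)) if and only if the set A_0(f) = {x : ∃ x_n → x, f(x_n) → sup_X f} is a singleton {x⁺}; in that case σ'_f(g) = g(x⁺) for all g ∈ C(X). -/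
open Filter Topology

/-- On a compact metric space, the supremum functional is fully Hadamard differentiable at a
bounded `f` tangentially to `C(X)` (i.e. its directional derivative `g ↦ sup_{A_0(f)} g` is
linear on `C(X)`) if and only if `A_0(f)` is a singleton `{x⁺}`, in which case
`σ'_f(g) = g(x⁺)`. -/
theorem stmt_8 {X : Type*} [MetricSpace X] [CompactSpace X] [Nonempty X]
    (f : X → ℝ) (hf : ∃ C, ∀ x, |f x| ≤ C) :
    ((∀ g₁ g₂ : C(X, ℝ),
        sSup ((⇑(g₁ + g₂)) '' {x : X | ∃ u : ℕ → X,
            Tendsto u atTop (𝓝 x) ∧ Tendsto (fun k => f (u k)) atTop (𝓝 (⨆ y, f y))}) =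
          sSup ((⇑g₁) '' {x : X | ∃ u : ℕ → X,
            Tendsto u atTop (𝓝 x) ∧ Tendsto (fun k => f (u k)) atTop (𝓝 (⨆ y, f y))}) +
          sSup ((⇑g₂) '' {x : X | ∃ u : ℕ → X,
            Tendsto u atTop (𝓝 x) ∧ Tendsto (fun k => f (u k)) atTop (𝓝 (⨆ y, f y))})) ∧
      (∀ (c : ℝ) (g : C(X, ℝ)),
        sSup ((⇑(c • g)) '' {x : X | ∃ u : ℕ → X,
            Tendsto u atTop (𝓝 x) ∧ Tendsto (fun k => f (u k)) atTop (𝓝 (⨆ y, f y))}) =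
          c * sSup ((⇑g) '' {x : X | ∃ u : ℕ → X,
            Tendsto u atTop (𝓝 x) ∧ Tendsto (fun k => f (u k)) atTop (𝓝 (⨆ y, f y))})))
    ↔ ∃ xp : X,
        {x : X | ∃ u : ℕ → X,
            Tendsto u atTop (𝓝 x) ∧ Tendsto (fun k => f (u k)) atTop (𝓝 (⨆ y, f y))} = {xp} ∧
        ∀ g : C(X, ℝ),
          sSup ((⇑g) '' {x : X | ∃ u : ℕ → X,
            Tendsto u atTop (𝓝 x) ∧ Tendsto (fun k => f (u k)) atTop (𝓝 (⨆ y, f y))}) = g xp := by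

  set A : Set X := {x : X | ∃ u : ℕ → X,
      Tendsto u atTop (𝓝 x) ∧ Tendsto (fun k => f (u k)) atTop (𝓝 (⨆ y, f y))} with hA
  -- A is nonempty
  obtain ⟨C, hC⟩ := hf
  have hbdd : BddAbove (Set.range f) := ⟨C, by rintro _ ⟨x, rfl⟩; exact (abs_le.mp (hC x)).2⟩
  have hne : (Set.range f).Nonempty := Set.range_nonempty f
  have hAne : A.Nonempty := by
    obtain ⟨v, -, hv, hvmem⟩ := exists_seq_tendsto_sSup hne hbdd
    choose u hu using hvmem
    obtain ⟨x, -, φ, hφ, hlim⟩ := IsCompact.tendsto_subseq (x := u) isCompact_univ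
      (fun n => Set.mem_univ _)
    refine ⟨x, u ∘ φ, hlim, ?_⟩
    have : Tendsto (fun k => v (φ k)) atTop (𝓝 (sSup (Set.range f))) :=
      hv.comp hφ.tendsto_atTop
    simpa [Function.comp, hu, iSup] using this
  constructor
  · rintro ⟨-, hsmul⟩
    obtain ⟨a, ha⟩ := hAne
    refine ⟨a, ?_, ?_⟩
    · -- A is a singleton
      ext b
      simp only [Set.mem_singleton_iff]
      constructor
      · intro hb
        by_contra hab
        set g : C(X, ℝ) := ⟨fun x => dist x a, (continuous_id.dist continuous_const)⟩ with hg
        have hbddg : BddAbove (⇑g '' A) :=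
          (isCompact_range g.continuous).bddAbove.mono (Set.image_subset_range _ _)
        have hbddng : BddAbove (⇑((-1 : ℝ) • g) '' A) :=
          (isCompact_range ((-1 : ℝ) • g).continuous).bddAbove.mono
            (Set.image_subset_range _ _)
        have h1 : sSup ((⇑((-1 : ℝ) • g)) '' A) = -1 * sSup ((⇑g) '' A) := hsmul (-1) g
        have h2 : (0 : ℝ) ≤ sSup ((⇑((-1 : ℝ) • g)) '' A) := by
          have := le_csSup hbddng ⟨a, ha, rfl⟩
          simpa [hg] using this
        have h3 : dist b a ≤ sSup ((⇑g) '' A) := le_csSup hbddg ⟨b, hb, rfl⟩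
        have h4 : 0 < dist b a := dist_pos.mpr hab
        nlinarith
      · rintro rfl; exact ha
    · intro g
      have hA1 : A = {a} := by
        ext b
        simp only [Set.mem_singleton_iff]
        constructor
        · intro hb
          by_contra hab
          set g : C(X, ℝ) := ⟨fun x => dist x a, (continuous_id.dist continuous_const)⟩ with hg
          have hbddg : BddAbove (⇑g '' A) :=
            (isCompact_range g.continuous).bddAbove.mono (Set.image_subset_range _ _)
          have hbddng : BddAbove (⇑((-1 : ℝ) • g) '' A) :=
            (isCompact_range ((-1 : ℝ) • g).continuous).bddAbove.mono
              (Set.image_subset_range _ _)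
          have h1 : sSup ((⇑((-1 : ℝ) • g)) '' A) = -1 * sSup ((⇑g) '' A) := hsmul (-1) g
          have h2 : (0 : ℝ) ≤ sSup ((⇑((-1 : ℝ) • g)) '' A) := by
            have := le_csSup hbddng ⟨a, ha, rfl⟩
            simpa [hg] using this
          have h3 : dist b a ≤ sSup ((⇑g) '' A) := le_csSup hbddg ⟨b, hb, rfl⟩
          have h4 : 0 < dist b a := dist_pos.mpr hab
          nlinarith
        · rintro rfl; exact ha
      rw [hA1, Set.image_singleton, csSup_singleton]
  · rintro ⟨xp, hxp, hval⟩
    refine ⟨fun g₁ g₂ => ?_, fun c g => ?_⟩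
    · rw [hxp] at *
      simp [Set.image_singleton]
    · rw [hxp] at *
      simp [Set.image_singleton]
end

section
/- For any f, g ∈ ℓ^∞(X) and all sequences t_n ↓ 0, f_n → f, g_n → g in sup norm, limsup_n (sup_X(f_n + t_n g_n) − sup_X f_n)/t_n ≤ σ'_f(g), where σ'_f(g) = lim_{ε↓0} sup_{A_ε(f)} g and A_ε(f) = {x : f(x) ≥ sup_X f − ε}. -/
open Filter Topology

/-- One-sided uniform bound: for `t_n ↓ 0`, `f_n → f` and `g_n → g` in sup norm,
`limsup_n (sup(f_n + t_n g_n) − sup f_n)/t_n ≤ σ'_f(g) = lim_{ε↓0} sup_{A_ε(f)} g`. -/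
theorem stmt_10 {X : Type*} [Nonempty X] (f g : X → ℝ)
    (hf : ∃ C, ∀ x, |f x| ≤ C) (hg : ∃ C, ∀ x, |g x| ≤ C)
    (t : ℕ → ℝ) (fs gs : ℕ → X → ℝ)
    (ht_anti : Antitone t) (ht_pos : ∀ n, 0 < t n) (ht : Tendsto t atTop (𝓝 0))
    (hfs_bdd : ∀ n, ∃ C, ∀ x, |fs n x| ≤ C) (hgs_bdd : ∀ n, ∃ C, ∀ x, |gs n x| ≤ C)
    (hfs : TendstoUniformly fs f atTop) (hgs : TendstoUniformly gs g atTop)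
    (L : ℝ)
    (hL : Tendsto (fun ε : ℝ => sSup (g '' {x | (⨆ y, f y) - ε ≤ f x}))
        (nhdsWithin 0 (Set.Ioi 0)) (𝓝 L)) :
    Filter.limsup (fun n => ((⨆ x, (fs n x + t n * gs n x)) - ⨆ x, fs n x) / t n) atTop ≤ L := by
  obtain ⟨Cg, hCg⟩ := hg
  have hCg0 : 0 ≤ Cg := le_trans (abs_nonneg _) (hCg (Classical.arbitrary X))
  set M := ⨆ y, f y with hM
  refine le_of_forall_gt_imp_ge_of_dense fun r hr => ?_
  have hmr : L < (L + r) / 2 := by linarith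
  have h1 : ∀ᶠ ε in 𝓝[>] (0:ℝ), sSup (g '' {x | M - ε ≤ f x}) < (L + r) / 2 :=
    hL.eventually (gt_mem_nhds hmr)
  obtain ⟨ε0, hσ, hε0⟩ := (h1.and eventually_mem_nhdsWithin).exists
  rw [Set.mem_Ioi] at hε0
  set σ0 := sSup (g '' {x | M - ε0 ≤ f x}) with hσ0
  set δ : ℝ := min (ε0 / 4) ((r - L) / 4) with hδdef
  have hδ : 0 < δ := lt_min (by linarith) (by linarith)
  have hδ1 : δ ≤ ε0 / 4 := min_le_left _ _
  have hδ2 : δ ≤ (r - L) / 4 := min_le_right _ _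
  have hA : ∀ᶠ n in atTop, ∀ x, |fs n x - f x| ≤ δ := by
    filter_upwards [Metric.tendstoUniformly_iff.mp hfs δ hδ] with n h x
    have := h x
    rw [Real.dist_eq, abs_sub_comm] at this
    exact this.le
  have hB : ∀ᶠ n in atTop, ∀ x, |gs n x - g x| ≤ δ := by
    filter_upwards [Metric.tendstoUniformly_iff.mp hgs δ hδ] with n h x
    have := h x
    rw [Real.dist_eq, abs_sub_comm] at this
    exact this.le
  have hcpos : 0 < ε0 / (4 * (Cg + 2 * δ) + 1) := by positivity
  have hT : ∀ᶠ n in atTop, t n < ε0 / (4 * (Cg + 2 * δ) + 1) :=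
    ht.eventually (gt_mem_nhds hcpos)
  have key : ∀ᶠ n in atTop,
      ((⨆ x, (fs n x + t n * gs n x)) - ⨆ x, fs n x) / t n ≤ r ∧
      -(Cg + 2 * δ) ≤ ((⨆ x, (fs n x + t n * gs n x)) - ⨆ x, fs n x) / t n := by
    filter_upwards [hA, hB, hT] with n ha hb htn
    have htn0 : 0 < t n := ht_pos n
    -- bounds on gs n
    have hbg : ∀ x, |gs n x| ≤ Cg + δ := by
      intro x
      calc |gs n x| ≤ |gs n x - g x| + |g x| := by
            simpa using abs_add_le (gs n x - g x) (g x)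
        _ ≤ δ + Cg := add_le_add (hb x) (hCg x)
        _ = Cg + δ := by ring
    obtain ⟨Cn, hCn⟩ := hfs_bdd n
    have bdd0 : BddAbove (Set.range (fs n)) := by
      refine ⟨Cn, ?_⟩
      rintro y ⟨x, rfl⟩
      exact (abs_le.mp (hCn x)).2
    have bdd1 : BddAbove (Set.range fun x => fs n x + t n * gs n x) := by
      refine ⟨Cn + t n * (Cg + δ), ?_⟩
      rintro y ⟨x, rfl⟩
      have h1 : fs n x ≤ Cn := (abs_le.mp (hCn x)).2
      have h2 : t n * gs n x ≤ t n * (Cg + δ) :=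
        mul_le_mul_of_nonneg_left ((abs_le.mp (hbg x)).2) htn0.le
      exact add_le_add h1 h2
    set S0 := ⨆ x, fs n x with hS0def
    set S1 := ⨆ x, fs n x + t n * gs n x with hS1def
    have hS0ge : ∀ x, fs n x ≤ S0 := fun x => le_ciSup bdd0 x
    have hS1ge : ∀ x, fs n x + t n * gs n x ≤ S1 := fun x => le_ciSup bdd1 x
    have htδ : 0 < t n * δ := by positivity
    obtain ⟨x1, hx1⟩ : ∃ x, S1 - t n * δ < fs n x + t n * gs n x :=
      exists_lt_of_lt_ciSup (by linarith)
    obtain ⟨x0, hx0⟩ : ∃ x, S0 - t n * δ < fs n x :=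
      exists_lt_of_lt_ciSup (by linarith)
    have hMS0 : M ≤ S0 + δ := by
      refine ciSup_le fun x => ?_
      have h1 := (abs_le.mp (ha x)).1
      have h2 := hS0ge x
      linarith
    -- product bounds
    have p1 : t n * gs n x1 ≤ t n * (Cg + δ) :=
      mul_le_mul_of_nonneg_left ((abs_le.mp (hbg x1)).2) htn0.le
    have p1' : -(t n * (Cg + δ)) ≤ t n * gs n x1 := by
      have := mul_le_mul_of_nonneg_left ((abs_le.mp (hbg x1)).1) htn0.le
      linarith [this]
    have p2 : -(t n * (Cg + δ)) ≤ t n * gs n x0 := by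
      have := mul_le_mul_of_nonneg_left ((abs_le.mp (hbg x0)).1) htn0.le
      linarith [this]
    have p3 : t n * δ + t n * (Cg + δ) ≤ ε0 / 4 := by
      have h4 : 0 < 4 * (Cg + 2 * δ) + 1 := by positivity
      have := (lt_div_iff₀ h4).mp htn
      nlinarith [htn0.le, hδ.le, hCg0]
    -- x1 is a near-maximizer of f
    have hfx1 : M - ε0 ≤ f x1 := by
      have hS1lb : S0 - t n * δ + t n * gs n x0 ≤ S1 := by
        have := hS1ge x0
        linarith
      have h1 := (abs_le.mp (ha x1)).2
      -- fs n x1 - f x1 ≤ δ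
      linarith
    have hgx1 : g x1 ≤ σ0 := by
      refine le_csSup ⟨Cg, ?_⟩ ⟨x1, hfx1, rfl⟩
      rintro y ⟨x, _, rfl⟩
      exact (abs_le.mp (hCg x)).2
    have hgsx1 : gs n x1 ≤ σ0 + δ := by
      have := (abs_le.mp (hb x1)).2
      linarith
    constructor
    · rw [div_le_iff₀ htn0]
      have h1 : S1 - S0 ≤ t n * gs n x1 + t n * δ := by
        have := hS0ge x1
        linarith
      have h2 : t n * gs n x1 ≤ t n * (σ0 + δ) :=
        mul_le_mul_of_nonneg_left hgsx1 htn0.le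
      have h3 : σ0 + 2 * δ ≤ r := by linarith
      nlinarith
    · rw [le_div_iff₀ htn0]
      have h1 : S0 - t n * δ + t n * gs n x0 ≤ S1 := by
        have := hS1ge x0
        linarith
      nlinarith
  refine Filter.limsup_le_of_le ?_ (key.mono fun n h => h.1)
  exact Filter.isCoboundedUnder_le_of_eventually_le atTop (key.mono fun n h => h.2)
end

section
/- Dually, for any f, g ∈ ℓ^∞(X) and all sequences t_n ↓ 0, f_n → f, g_n → g in sup norm, liminf_n (inf_X(f_n + t_n g_n) − inf_X f_n)/t_n ≥ ι'_f(g), where ι'_f(g) = lim_{ε↓0} inf_{B_ε(f)} g and B_ε(f) = {x : f(x) ≤ inf_X f + ε}. -/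
open Filter Topology

/-- Dual one-sided bound: for `t_n ↓ 0`, `f_n → f` and `g_n → g` in sup norm,
`liminf_n (inf(f_n + t_n g_n) − inf f_n)/t_n ≥ ι'_f(g) = lim_{ε↓0} inf_{B_ε(f)} g`. -/
theorem stmt_11 {X : Type*} [Nonempty X] (f g : X → ℝ)
    (hf : ∃ C, ∀ x, |f x| ≤ C) (hg : ∃ C, ∀ x, |g x| ≤ C)
    (t : ℕ → ℝ) (fs gs : ℕ → X → ℝ)
    (ht_anti : Antitone t) (ht_pos : ∀ n, 0 < t n) (ht : Tendsto t atTop (𝓝 0))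
    (hfs_bdd : ∀ n, ∃ C, ∀ x, |fs n x| ≤ C) (hgs_bdd : ∀ n, ∃ C, ∀ x, |gs n x| ≤ C)
    (hfs : TendstoUniformly fs f atTop) (hgs : TendstoUniformly gs g atTop)
    (L : ℝ)
    (hL : Tendsto (fun ε : ℝ => sInf (g '' {x | f x ≤ (⨅ y, f y) + ε}))
        (nhdsWithin 0 (Set.Ioi 0)) (𝓝 L)) :
    L ≤ Filter.liminf (fun n => ((⨅ x, (fs n x + t n * gs n x)) - ⨅ x, fs n x) / t n) atTop := by
  obtain ⟨Cg, hCg⟩ := hg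
  have hCg0 : 0 ≤ Cg := le_trans (abs_nonneg _) (hCg Classical.ofNonempty)
  set If := ⨅ y, f y with hIf
  set q : ℕ → ℝ := fun n => ((⨅ x, (fs n x + t n * gs n x)) - ⨅ x, fs n x) / t n with hq
  -- boundedness of the approximating functions, eventually uniform
  have hbg : ∀ᶠ n in atTop, ∀ x, |gs n x| ≤ Cg + 1 := by
    filter_upwards [Metric.tendstoUniformly_iff.mp hgs 1 one_pos] with n hn x
    have h1 := hn x
    rw [Real.dist_eq] at h1
    have := hCg x
    have : |gs n x| ≤ |gs n x - g x| + |g x| := by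
      calc |gs n x| = |(gs n x - g x) + g x| := by ring_nf
        _ ≤ _ := abs_add_le _ _
    rw [abs_sub_comm] at h1
    linarith [hCg x]
  -- bdd below facts
  have hbbf : ∀ n, BddBelow (Set.range (fs n)) := by
    intro n; obtain ⟨C, hC⟩ := hfs_bdd n
    exact ⟨-C, by rintro _ ⟨x, rfl⟩; linarith [(abs_le.mp (hC x)).1]⟩
  have hbbh : ∀ n, BddBelow (Set.range fun x => fs n x + t n * gs n x) := by
    intro n; obtain ⟨C, hC⟩ := hfs_bdd n; obtain ⟨D, hD⟩ := hgs_bdd n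
    have hD0 : 0 ≤ D := le_trans (abs_nonneg _) (hD Classical.ofNonempty)
    refine ⟨-C - t n * D, ?_⟩
    rintro _ ⟨x, rfl⟩
    dsimp only
    have h1 := (abs_le.mp (hC x)).1
    have h2 := (abs_le.mp (hD x)).1
    nlinarith [mul_le_mul_of_nonneg_left h2 (ht_pos n).le]
  have hbbgim : ∀ ε : ℝ, BddBelow (g '' {x | f x ≤ If + ε}) := by
    intro ε; exact ⟨-Cg, by rintro _ ⟨x, -, rfl⟩; linarith [(abs_le.mp (hCg x)).1]⟩
  -- eventual upper bound for q, giving coboundedness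
  have hub : ∀ᶠ n in atTop, q n ≤ Cg + 2 := by
    filter_upwards [hbg] with n hn
    have hpos := ht_pos n
    -- pick y with fs n y < inf fs n + t n
    obtain ⟨y, hy⟩ := exists_lt_of_ciInf_lt (show (⨅ x, fs n x) < (⨅ x, fs n x) + t n by linarith)
    have h1 : (⨅ x, (fs n x + t n * gs n x)) ≤ fs n y + t n * gs n y := ciInf_le (hbbh n) y
    have h2 : t n * gs n y ≤ t n * (Cg + 1) :=
      mul_le_mul_of_nonneg_left (le_trans (le_abs_self _) (hn y)) hpos.le
    have : q n ≤ (t n + t n * (Cg + 1)) / t n :=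
      div_le_div_of_nonneg_right (by linarith) hpos.le -- maybe wrong name
    calc q n ≤ (t n + t n * (Cg + 1)) / t n := this
      _ = Cg + 2 := by field_simp; ring
  have hcob : IsCoboundedUnder (· ≥ ·) atTop q :=
    IsBoundedUnder.isCoboundedUnder_ge ⟨Cg + 2, hub⟩
  -- main step : for every ε > 0, sInf (g '' B ε) ≤ liminf q
  have key : ∀ ε : ℝ, 0 < ε → sInf (g '' {x | f x ≤ If + ε}) ≤ Filter.liminf q atTop := by
    intro ε hε
    set mε := sInf (g '' {x | f x ≤ If + ε}) with hmε
    have key2 : ∀ δ : ℝ, 0 < δ → mε - δ ≤ Filter.liminf q atTop := by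
      intro δ hδ
      refine le_liminf_of_le hcob ?_
      have hM : (0:ℝ) < 2 * Cg + 3 + δ := by linarith
      have htsmall : ∀ᶠ n in atTop, t n * (2 * Cg + 3 + δ) < ε / 2 := by
        have : Tendsto (fun n => t n * (2 * Cg + 3 + δ)) atTop (𝓝 0) := by
          simpa using ht.mul_const (2 * Cg + 3 + δ)
        exact (this.eventually (eventually_lt_nhds (show (0:ℝ) < ε/2 by linarith)))
      filter_upwards [hbg, htsmall,
        Metric.tendstoUniformly_iff.mp hfs (ε/4) (by linarith),
        Metric.tendstoUniformly_iff.mp hgs (δ/2) (by linarith)] with n hgb hts hfc hgc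
      have hpos := ht_pos n
      set hₙ : X → ℝ := fun x => fs n x + t n * gs n x with hhn
      -- near-minimizer of hₙ
      obtain ⟨x, hx⟩ := exists_lt_of_ciInf_lt
        (show (⨅ z, hₙ z) < (⨅ z, hₙ z) + t n * (δ/2) by nlinarith)
      -- (a) inf hₙ ≤ inf fs n + t n * (Cg + 1)
      have ha : (⨅ z, hₙ z) ≤ (⨅ z, fs n z) + t n * (Cg + 1) := by
        have : ∀ z, (⨅ z, hₙ z) - t n * (Cg + 1) ≤ fs n z := by
          intro z
          have h1 : (⨅ z, hₙ z) ≤ fs n z + t n * gs n z := ciInf_le (hbbh n) z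
          have h2 : t n * gs n z ≤ t n * (Cg + 1) :=
            mul_le_mul_of_nonneg_left (le_trans (le_abs_self _) (hgb z)) hpos.le
          linarith
        have := le_ciInf this
        linarith
      -- (b) fs n x is close to inf fs n
      have hb : fs n x ≤ (⨅ z, fs n z) + t n * (2 * Cg + 2 + δ/2) := by
        have h2 : t n * (-(Cg + 1)) ≤ t n * gs n x :=
          mul_le_mul_of_nonneg_left (neg_le_of_abs_le (hgb x)) hpos.le
        have : fs n x + t n * gs n x < (⨅ z, hₙ z) + t n * (δ/2) := hx
        nlinarith
      -- (c) inf fs n ≤ If + ε/4 and f x ≤ fs n x + ε/4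
      have hc1 : (⨅ z, fs n z) ≤ If + ε/4 := by
        have : ∀ z, (⨅ z, fs n z) - ε/4 ≤ f z := by
          intro z
          have h1 : (⨅ z, fs n z) ≤ fs n z := ciInf_le (hbbf n) z
          have h2 := hfc z
          rw [Real.dist_eq, abs_sub_lt_iff] at h2
          linarith [h2.1]
        have := le_ciInf this
        rw [← hIf] at this
        linarith
      have hc2 : f x ≤ fs n x + ε/4 := by
        have h2 := hfc x
        rw [Real.dist_eq, abs_sub_lt_iff] at h2
        linarith [h2.2]
      -- (d) x ∈ B ε
      have hd : f x ≤ If + ε := by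
        have h3 : t n * (2 * Cg + 2 + δ/2) ≤ t n * (2 * Cg + 3 + δ) := by
          apply mul_le_mul_of_nonneg_left _ hpos.le; linarith
        linarith
      -- (e) mε ≤ g x ≤ gs n x + δ/2
      have he : mε ≤ gs n x + δ/2 := by
        have h1 : mε ≤ g x := csInf_le (hbbgim ε) ⟨x, hd, rfl⟩
        have h2 := hgc x
        rw [Real.dist_eq, abs_sub_lt_iff] at h2
        linarith [h2.1]
      -- (f) conclude q n ≥ mε - δ
      have hf1 : (⨅ z, fs n z) ≤ fs n x := ciInf_le (hbbf n) x
      have hnum : (mε - δ) * t n ≤ (⨅ z, hₙ z) - ⨅ z, fs n z := by nlinarith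
      have : mε - δ ≤ ((⨅ z, hₙ z) - ⨅ z, fs n z) / t n := by
        rw [le_div_iff₀ hpos]; exact hnum
      simpa [hq, hhn] using this
    by_contra h
    push_neg at h
    have := key2 ((mε - Filter.liminf q atTop) / 2) (by linarith)
    linarith
  exact le_of_tendsto hL (eventually_nhdsWithin_of_forall fun ε hε => key ε hε)
end

section
/- Let B be a Banach space, X ⊂ B, and suppose there exist x ∈ X and δ > 0 with the closed ball B(x, δ) ⊆ X. Then for every bounded continuous prelinear function g: X → ℝ, its linear extension g̃ to span(X) is continuous. -/
open Filter Topology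

/-- If `X ⊆ B` contains a closed ball, then every bounded continuous prelinear function on
`X` has a continuous linear extension to `span(X)`. -/
theorem stmt_13 {B : Type*} [NormedAddCommGroup B] [NormedSpace ℝ B] [CompleteSpace B]
    (X : Set B) (x₀ : B) (hx₀ : x₀ ∈ X) (δ : ℝ) (hδ : 0 < δ)
    (hball : Metric.closedBall x₀ δ ⊆ X)
    (g : X → ℝ) (hgb : ∃ M, ∀ p : X, |g p| ≤ M) (hgc : Continuous g)
    (hpre : ∀ (r : ℕ) (c : Fin r → ℝ) (v : Fin r → X),
      (∑ i, c i • (v i : B)) = 0 → (∑ i, c i * g (v i)) = 0) :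
    ∀ G : Submodule.span ℝ X →ₗ[ℝ] ℝ,
      (∀ (x : B) (hx : x ∈ X), G ⟨x, Submodule.subset_span hx⟩ = g ⟨x, hx⟩) →
      Continuous G := by
  intro G hG
  obtain ⟨M, hM⟩ := hgb
  have hM0 : 0 ≤ M := le_trans (abs_nonneg _) (hM ⟨x₀, hx₀⟩)
  -- key bound: for z in span with ‖z‖ ≤ δ, |G z| ≤ 2M
  have key : ∀ z : Submodule.span ℝ X, ‖(z : B)‖ ≤ δ → ‖G z‖ ≤ 2 * M := by
    intro z hz
    have hmem : x₀ + (z : B) ∈ X := by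
      apply hball
      simp [Metric.mem_closedBall, dist_eq_norm]
      simpa using hz
    have ha : x₀ ∈ Submodule.span ℝ X := Submodule.subset_span hx₀
    have hb : x₀ + (z : B) ∈ Submodule.span ℝ X := Submodule.subset_span hmem
    have hzeq : z = (⟨x₀ + (z : B), hb⟩ : Submodule.span ℝ X) - ⟨x₀, ha⟩ := by
      ext; simp
    have : G z = g ⟨x₀ + (z : B), hmem⟩ - g ⟨x₀, hx₀⟩ := by
      rw [congrArg G hzeq, map_sub, hG _ hmem, hG _ hx₀]
    rw [this]
    calc ‖g ⟨x₀ + (z : B), hmem⟩ - g ⟨x₀, hx₀⟩‖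
        ≤ ‖g ⟨x₀ + (z : B), hmem⟩‖ + ‖g ⟨x₀, hx₀⟩‖ := norm_sub_le _ _
      _ ≤ M + M := add_le_add (hM _) (hM _)
      _ = 2 * M := by ring
  apply AddMonoidHomClass.continuous_of_bound G (2 * M / δ)
  intro y
  rcases eq_or_ne y 0 with rfl | hy
  · simp [div_nonneg (by linarith) hδ.le]
  · have hyn : (0:ℝ) < ‖(y : B)‖ := by
      rw [norm_pos_iff]
      exact fun h => hy (Subtype.ext h)
    set z : Submodule.span ℝ X := (δ / ‖(y : B)‖) • y with hzdef
    have hznorm : ‖(z : B)‖ = δ := by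
      simp [hzdef, norm_smul, abs_of_pos (div_pos hδ hyn), div_mul_cancel₀ _ hyn.ne', hδ.le]
    have hGz : ‖G z‖ ≤ 2 * M := key z hznorm.le
    have hGzy : G z = (δ / ‖(y : B)‖) * G y := by
      simp [hzdef, map_smul, smul_eq_mul]
    rw [hGzy] at hGz
    have h1 : ‖(δ / ‖(y : B)‖) * G y‖ = (δ / ‖(y : B)‖) * ‖G y‖ := by
      rw [norm_mul, Real.norm_eq_abs, abs_of_pos (div_pos hδ hyn)]
    rw [h1] at hGz
    rw [div_mul_eq_mul_div, div_le_iff₀ hyn] at hGz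
    rw [div_mul_eq_mul_div, le_div_iff₀ hδ]
    have heq : ‖y‖ = ‖(y : B)‖ := rfl
    rw [heq]
    nlinarith [hGz]
end

section
/- Let (X, d) be a totally bounded metric space and f ∈ C_u(X, d) (bounded uniformly continuous), f not identically zero. Then the supremum functional σ on ℓ^∞(X) is Hadamard directionally differentiable at f tangentially to C_u(X, d), with σ'_f(g) = sup_{M̄⁺(f)} ḡ, where ḡ and f̄ are the unique continuous extensions of g and f to the completion X̄, and M̄⁺(f) = {x ∈ X̄ : f̄(x) = sup_X f}. -/
open Filter Topology UniformSpace

/-- On a totally bounded metric space, the supremum functional is Hadamard directionally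
differentiable at a bounded uniformly continuous `f ≠ 0` tangentially to `C_u(X,d)`, with
derivative `σ'_f(g) = sup_{M̄⁺(f)} ḡ`, where bars denote the continuous extensions to the
completion `X̄` and `M̄⁺(f) = {x ∈ X̄ : f̄(x) = sup_X f}`. -/
theorem stmt_16 {X : Type*} [MetricSpace X] [Nonempty X]
    (hX : TotallyBounded (Set.univ : Set X))
    (f : X → ℝ) (hfu : UniformContinuous f) (hfb : ∃ C, ∀ x, |f x| ≤ C) (hf0 : ∃ x, f x ≠ 0)
    (g : X → ℝ) (hgu : UniformContinuous g) (hgb : ∃ C, ∀ x, |g x| ≤ C)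
    (t : ℕ → ℝ) (hs : ℕ → X → ℝ)
    (ht_anti : Antitone t) (ht_pos : ∀ n, 0 < t n) (ht : Tendsto t atTop (𝓝 0))
    (hhs_bdd : ∀ n, ∃ C, ∀ x, |hs n x| ≤ C)
    (hhs : TendstoUniformly hs g atTop) :
    Tendsto (fun n => ((⨆ x, (f x + t n * hs n x)) - ⨆ x, f x) / t n) atTop
      (𝓝 (sSup (UniformSpace.Completion.extension g ''
        {z : UniformSpace.Completion X |
          UniformSpace.Completion.extension f z = ⨆ y, f y}))) := by
  classical
  obtain ⟨Cf, hCf⟩ := hfb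
  obtain ⟨Cg, hCg⟩ := hgb
  -- completion is compact
  have htb : TotallyBounded (Set.univ : Set (Completion X)) := by
    have := (hX.image (Completion.uniformContinuous_coe X)).closure
    rwa [Set.image_univ, (Completion.denseRange_coe (α := X)).closure_range] at this
  have : CompactSpace (Completion X) :=
    ⟨TotallyBounded.isCompact_of_isClosed htb isClosed_univ⟩
  set A : ℝ := ⨆ y, f y with hA
  set F := Completion.extension f with hF
  set G := Completion.extension g with hG
  have hFc : Continuous F := Completion.continuous_extension
  have hGc : Continuous G := Completion.continuous_extension
  have hFcoe : ∀ x : X, F (x : Completion X) = f x := fun x => Completion.extension_coe hfu x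
  have hGcoe : ∀ x : X, G (x : Completion X) = g x := fun x => Completion.extension_coe hgu x
  have hbf : BddAbove (Set.range f) := ⟨Cf, by rintro _ ⟨x, rfl⟩; exact (abs_le.1 (hCf x)).2⟩
  have hfA : ∀ x, f x ≤ A := fun x => le_ciSup hbf x
  have hFA : ∀ z, F z ≤ A := by
    intro z
    refine Completion.induction_on z (isClosed_le hFc continuous_const) fun x => ?_
    rw [hFcoe]; exact hfA x
  set M := {z : Completion X | F z = A} with hM
  haveI : Nonempty (Completion X) := ⟨((Classical.arbitrary X : X) : Completion X)⟩
  have hMne : M.Nonempty := by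
    obtain ⟨z0, -, hz0⟩ := isCompact_univ.exists_isMaxOn Set.univ_nonempty hFc.continuousOn
    refine ⟨z0, le_antisymm (hFA z0) (ciSup_le fun x => ?_)⟩
    rw [← hFcoe x]; exact hz0 (Set.mem_univ x)
  have hMcl : IsClosed M := isClosed_eq hFc continuous_const
  set L := sSup (G '' M) with hL
  have hGMb : BddAbove (G '' M) := (hMcl.isCompact.image hGc).bddAbove
  have hGleL : ∀ z ∈ M, G z ≤ L := fun z hz => le_csSup hGMb ⟨z, hz, rfl⟩
  -- key compactness lemma
  have key : ∀ ε > (0:ℝ), ∃ δ > (0:ℝ), ∀ z : Completion X, A - δ ≤ F z → G z ≤ L + ε := by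
    intro ε hε
    by_contra h
    push_neg at h
    set V : ℕ → Set (Completion X) :=
      fun k => {z | A - 1/(k+1) ≤ F z ∧ L + ε ≤ G z} with hV
    have hVc : ∀ k, IsClosed (V k) := fun k =>
      (isClosed_le continuous_const hFc).inter (isClosed_le continuous_const hGc)
    have hVn : ∀ k, (V k).Nonempty := by
      intro k
      obtain ⟨z, hz1, hz2⟩ := h (1/(k+1)) (by positivity)
      exact ⟨z, hz1, hz2.le⟩
    have hVd : ∀ k, V (k+1) ⊆ V k := by
      intro k z hz
      refine ⟨le_trans ?_ hz.1, hz.2⟩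
      have h : (1:ℝ)/((k:ℝ)+1+1) ≤ 1/((k:ℝ)+1) :=
        one_div_le_one_div_of_le (by positivity) (by linarith)
      push_cast
      linarith
    obtain ⟨z, hz⟩ := IsCompact.nonempty_iInter_of_sequence_nonempty_isCompact_isClosed
      V hVd hVn (hVc 0).isCompact hVc
    simp only [Set.mem_iInter] at hz
    have hzA : A ≤ F z := by
      have hlim : Tendsto (fun k : ℕ => A - 1/((k:ℝ)+1)) atTop (𝓝 (A - 0)) :=
        tendsto_const_nhds.sub tendsto_one_div_add_atTop_nhds_zero_nat
    -- conclude
      rw [sub_zero] at hlim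
      exact le_of_tendsto hlim (Filter.Eventually.of_forall fun k => (hz k).1)
    have hzM : z ∈ M := le_antisymm (hFA z) hzA
    have := hGleL z hzM
    have := (hz 0).2
    linarith
  -- approximation by points of X
  have approx : ∀ z : Completion X, ∀ δ > (0:ℝ), ∀ ε > (0:ℝ),
      ∃ x : X, |f x - F z| < δ ∧ |g x - G z| < ε := by
    intro z δ hδ ε hε
    have hU : IsOpen {w : Completion X | |F w - F z| < δ ∧ |G w - G z| < ε} :=
      (isOpen_lt (hFc.sub continuous_const).abs continuous_const).inter
        (isOpen_lt (hGc.sub continuous_const).abs continuous_const)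
    obtain ⟨x, hx⟩ := (Completion.denseRange_coe (α := X)).exists_mem_open hU
      ⟨z, by simp [hδ, hε]⟩
    exact ⟨x, by simpa [hFcoe, hGcoe] using hx⟩
  -- sup of perturbed functions is bounded above
  have hbn : ∀ n, BddAbove (Set.range fun x => f x + t n * hs n x) := by
    intro n
    obtain ⟨Cn, hCn⟩ := hhs_bdd n
    refine ⟨Cf + t n * Cn, ?_⟩
    rintro _ ⟨x, rfl⟩
    have h1 : t n * hs n x ≤ t n * Cn :=
      mul_le_mul_of_nonneg_left ((abs_le.1 (hCn x)).2) (ht_pos n).le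
    have := (abs_le.1 (hCf x)).2
    show f x + t n * hs n x ≤ Cf + t n * Cn
    linarith
  set S : ℕ → ℝ := fun n => ⨆ x, f x + t n * hs n x with hS
  -- upper bound
  have hub : ∀ ε > (0:ℝ), ∀ᶠ n in atTop, (S n - A) / t n ≤ L + 2*ε := by
    intro ε hε
    obtain ⟨δ, hδ, hkey⟩ := key ε hε
    have E1 : ∀ᶠ n in atTop, ∀ x, dist (g x) (hs n x) < ε :=
      Metric.tendstoUniformly_iff.1 hhs ε hε
    have E2 : ∀ᶠ n in atTop, t n * (Cg + ε + |L| + 2*ε) < δ :=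
      Tendsto.eventually_lt_const hδ (by simpa using ht.mul_const (Cg + ε + |L| + 2*ε))
    filter_upwards [E1, E2] with n h1 h2
    have hbound : ∀ x, f x + t n * hs n x ≤ A + t n * (L + 2*ε) := by
      intro x
      have hhg : hs n x ≤ g x + ε := by
        have := h1 x; rw [Real.dist_eq] at this
        have := (abs_lt.1 this).1; linarith
      by_cases hx : A - δ ≤ f x
      · have hgx : g x ≤ L + ε := by
          have := hkey (x : Completion X) (by rw [hFcoe]; exact hx)
          rwa [hGcoe] at this
        have : t n * hs n x ≤ t n * (L + 2*ε) :=
          mul_le_mul_of_nonneg_left (by linarith) (ht_pos n).le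
        have := hfA x; linarith
      · push_neg at hx
        have hgx : hs n x ≤ Cg + ε := by
          have := (abs_le.1 (hCg x)).2; linarith
        have h3 : t n * hs n x ≤ t n * (Cg + ε) :=
          mul_le_mul_of_nonneg_left hgx (ht_pos n).le
        have h4 : - (t n * (|L| + 2*ε)) ≤ t n * (L + 2*ε) := by
          rw [← mul_neg]
          refine mul_le_mul_of_nonneg_left ?_ (ht_pos n).le
          have := neg_abs_le L; linarith
        have h5 : t n * (Cg + ε) = t n * (Cg + ε + |L| + 2*ε) - t n * (|L| + 2*ε) := by ring
        linarith
    have hSle : S n ≤ A + t n * (L + 2*ε) := ciSup_le hbound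
    rw [div_le_iff₀ (ht_pos n)]
    linarith [hSle]
  -- lower bound
  have hlb : ∀ ε > (0:ℝ), ∀ᶠ n in atTop, L - 4*ε ≤ (S n - A) / t n := by
    intro ε hε
    obtain ⟨b, ⟨z, hzM, rfl⟩, hb⟩ : ∃ b ∈ G '' M, L - ε < b :=
      exists_lt_of_lt_csSup (hMne.image G) (by linarith)
    have E1 : ∀ᶠ n in atTop, ∀ x, dist (g x) (hs n x) < ε :=
      Metric.tendstoUniformly_iff.1 hhs ε hε
    filter_upwards [E1] with n h1
    obtain ⟨x, hx1, hx2⟩ := approx z (t n * ε) (mul_pos (ht_pos n) hε) ε hε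
    rw [hzM] at hx1
    have hfx : A - t n * ε < f x := by
      have := (abs_lt.1 hx1).1; linarith
    have hgx : G z - ε < g x := by
      have := (abs_lt.1 hx2).1; linarith
    have hhx : g x - ε < hs n x := by
      have := h1 x; rw [Real.dist_eq] at this
      have := (abs_lt.1 this).2; linarith
    have hSge : f x + t n * hs n x ≤ S n := le_ciSup (hbn n) x
    have h2 : t n * (G z - 2*ε) ≤ t n * hs n x :=
      mul_le_mul_of_nonneg_left (by linarith) (ht_pos n).le
    rw [le_div_iff₀ (ht_pos n)]
    have : t n * (G z - 3*ε) ≤ S n - A := by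
      have : A + t n * (G z - 3*ε) ≤ f x + t n * hs n x := by
        have : t n * (G z - 3*ε) = t n * (G z - 2*ε) - t n * ε := by ring
        linarith
      linarith
    have hG4 : (L - 4*ε) * t n ≤ t n * (G z - 3*ε) := by
      rw [mul_comm]
      refine mul_le_mul_of_nonneg_left ?_ (ht_pos n).le
      linarith
    linarith
  -- conclude
  rw [Metric.tendsto_atTop]
  intro ε hε
  have h8 : (0:ℝ) < ε/8 := by linarith
  obtain ⟨N1, hN1⟩ := eventually_atTop.1 (hub (ε/8) h8)
  obtain ⟨N2, hN2⟩ := eventually_atTop.1 (hlb (ε/8) h8)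
  refine ⟨max N1 N2, fun n hn => ?_⟩
  have hu := hN1 n (le_trans (le_max_left _ _) hn)
  have hl := hN2 n (le_trans (le_max_right _ _) hn)
  rw [Real.dist_eq, abs_lt]
  constructor <;> [linarith; linarith]
end
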